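/- arXiv:1404.0500 — 11 statements merged into one kernel-verified Lean document; each statement's English description precedes it below -/
import Mathlib

section
/- A subset K of X is q-compact if and only if the set K + θ(0) = {k + w : k ∈ K, w ∈ θ(0)} is q-compact. -/
open Set Pointwise

/-- Open ball of an asymmetric norm. -/
def asymBall {X : Type*} [AddCommGroup X] (q : X → ℝ) (x : X) (ε : ℝ) : Set X :=
  {y | q (y - x) < ε}

/-- Closed ball of an asymmetric norm. -/
def asymClosedBall {X : Type*} [AddCommGroup X] (q : X → ℝ) (x : X) (ε : ℝ) : Set X :=
  {y | q (y - x) ≤ ε}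

/-- The topology τ_q generated by the open balls of `q`. -/
def tauQ {X : Type*} [AddCommGroup X] (q : X → ℝ) : TopologicalSpace X :=
  TopologicalSpace.generateFrom {S | ∃ x ε, 0 < ε ∧ S = asymBall q x ε}

/-- The associated (symmetric) norm `q^s`. -/
def qs {X : Type*} [AddCommGroup X] (q : X → ℝ) : X → ℝ :=
  fun x => max (q x) (q (-x))

/-- The topology τ_{q^s} induced by the norm `q^s` (generated by its balls). -/
def tauQs {X : Type*} [AddCommGroup X] (q : X → ℝ) : TopologicalSpace X :=
  TopologicalSpace.generateFrom {S | ∃ x ε, 0 < ε ∧ S = {y | qs q (y - x) < ε}}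

/-- The set θ(0) = {x : q x = 0}. -/
def theta0 {X : Type*} [AddCommGroup X] (q : X → ℝ) : Set X :=
  {x | q x = 0}

/-- `x` is an extreme point of the convex set `A`. -/
def IsExtremePt {X : Type*} [AddCommGroup X] [Module ℝ X] (A : Set X) (x : X) : Prop :=
  x ∈ A ∧ ∀ y ∈ A, ∀ z ∈ A, ∀ l : ℝ, 0 < l → l < 1 →
    x = l • y + (1 - l) • z → x = y ∧ x = z

theorem stmt1 {X : Type*} [AddCommGroup X] [Module ℝ X] (q : X → ℝ)
    (hq0 : ∀ x, 0 ≤ q x)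
    (hqh : ∀ (t : ℝ) (x : X), 0 ≤ t → q (t • x) = t * q x)
    (hqtri : ∀ x y, q (x + y) ≤ q x + q y)
    (hqsep : ∀ x, (q x = 0 ∧ q (-x) = 0) ↔ x = 0)
    (K : Set X) :
    @IsCompact X (tauQ q) K ↔ @IsCompact X (tauQ q) (K + theta0 q) := by
  have hq00 : q 0 = 0 := by
    have := hqh 0 0 le_rfl
    simpa using this
  -- key: every τ_q-open set is stable under adding elements of θ(0)
  have key : ∀ U : Set X, (tauQ q).IsOpen U → ∀ x ∈ U, ∀ w, q w = 0 → x + w ∈ U := by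
    intro U hU
    induction hU with
    | basic S hS =>
        obtain ⟨c, ε, hε, rfl⟩ := hS
        intro x hx w hw
        simp only [asymBall, Set.mem_setOf_eq] at *
        have h1 : q (x + w - c) ≤ q (x - c) + q w := by
          have := hqtri (x - c) w
          have he : x - c + w = x + w - c := by abel
          rwa [he] at this
        calc q (x + w - c) ≤ q (x - c) + q w := h1
          _ = q (x - c) := by rw [hw, add_zero]
          _ < ε := hx
    | univ => intro x _ w _; trivial
    | inter U V _ _ ihU ihV =>
        intro x hx w hw
        exact ⟨ihU x hx.1 w hw, ihV x hx.2 w hw⟩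
    | sUnion S _ ih =>
        intro x hx w hw
        obtain ⟨U, hUS, hxU⟩ := hx
        exact ⟨U, hUS, ih U hUS x hxU w hw⟩
  letI : TopologicalSpace X := tauQ q
  have hsub : K ⊆ K + theta0 q := by
    intro k hk
    have : k + 0 ∈ K + theta0 q := Set.add_mem_add hk (by simpa [theta0] using hq00)
    simpa using this
  -- any open cover of K also covers K + θ(0)
  have cover : ∀ (S : Set X), IsOpen S → K ⊆ S → K + theta0 q ⊆ S := by
    intro S hS hKS x hx
    obtain ⟨k, hk, w, hw, rfl⟩ := hx
    exact key S hS k (hKS hk) w hw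
  constructor
  · intro hK
    rw [isCompact_iff_finite_subcover] at hK ⊢
    intro ι U hUo hcov
    obtain ⟨t, ht⟩ := hK U hUo (hsub.trans hcov)
    refine ⟨t, cover _ ?_ ht⟩
    exact isOpen_biUnion fun i _ => hUo i
  · intro hK'
    rw [isCompact_iff_finite_subcover] at hK' ⊢
    intro ι U hUo hcov
    obtain ⟨t, ht⟩ := hK' U hUo (cover _ (isOpen_iUnion hUo) hcov)
    exact ⟨t, hsub.trans ht⟩
end

section
/- If K ⊆ X is q-compact, then the closure of K with respect to the topology τ_{q^s} is also q-compact. -/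
open Set Pointwise

theorem stmt4 {X : Type*} [AddCommGroup X] [Module ℝ X] (q : X → ℝ)
    (hq0 : ∀ x, 0 ≤ q x)
    (hqh : ∀ (t : ℝ) (x : X), 0 ≤ t → q (t • x) = t * q x)
    (hqtri : ∀ x y, q (x + y) ≤ q x + q y)
    (hqsep : ∀ x, (q x = 0 ∧ q (-x) = 0) ↔ x = 0)
    (K : Set X) (hK : @IsCompact X (tauQ q) K) :
    @IsCompact X (tauQ q) (@closure X (tauQs q) K) := by
  classical
  have hq00 : q 0 = 0 := by
    have := hqh 0 0 le_rfl
    simpa using this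
  -- every tauQ-open set containing x contains a q-ball around x
  have hball : ∀ U : Set X, (tauQ q).IsOpen U → ∀ x ∈ U, ∃ ε > 0, asymBall q x ε ⊆ U := by
    intro U hU
    induction hU with
    | @basic S hS =>
        obtain ⟨z, ε, hε, rfl⟩ := hS
        intro x hx
        have hx' : q (x - z) < ε := hx
        refine ⟨ε - q (x - z), by linarith, ?_⟩
        intro w hw
        have hw' : q (w - x) < ε - q (x - z) := hw
        have htr : q (w - z) ≤ q (w - x) + q (x - z) := by
          have := hqtri (w - x) (x - z)
          simpa [sub_add_sub_cancel] using this
        show q (w - z) < ε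
        linarith
    | univ => exact fun x _ => ⟨1, one_pos, fun _ _ => trivial⟩
    | inter U V _ _ ihU ihV =>
        intro x hx
        obtain ⟨ε1, hε1, h1⟩ := ihU x hx.1
        obtain ⟨ε2, hε2, h2⟩ := ihV x hx.2
        refine ⟨min ε1 ε2, lt_min hε1 hε2, fun w hw => ?_⟩
        have hw' : q (w - x) < min ε1 ε2 := hw
        exact ⟨h1 (lt_of_lt_of_le hw' (min_le_left _ _)),
               h2 (lt_of_lt_of_le hw' (min_le_right _ _))⟩
    | sUnion S hS ih =>
        intro x hx
        obtain ⟨U, hUS, hxU⟩ := hx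
        obtain ⟨ε, hε, hsub⟩ := ih U hUS x hxU
        exact ⟨ε, hε, hsub.trans (Set.subset_sUnion_of_mem hUS)⟩
  -- every point of the tauQs-closure of K is at q-distance 0 from some point of K
  have hclsub : ∀ y ∈ @closure X (tauQs q) K, ∃ a ∈ K, q (y - a) = 0 := by
    intro y hy
    -- approximate y by points of K in the qs-norm
    have happrox : ∀ ε : ℝ, 0 < ε → ∃ x ∈ K, qs q (x - y) < ε := by
      intro ε hε
      have hopen : (tauQs q).IsOpen {z | qs q (z - y) < ε} :=
        TopologicalSpace.GenerateOpen.basic _ ⟨y, ε, hε, rfl⟩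
      have hyin : y ∈ {z | qs q (z - y) < ε} := by
        show qs q (y - y) < ε
        simp [qs, hq00, sub_self, hε]
      have hne : ({z | qs q (z - y) < ε} ∩ K).Nonempty := by
        letI := tauQs q
        exact mem_closure_iff.mp hy _ hopen hyin
      obtain ⟨x, hx1, hx2⟩ := hne
      exact ⟨x, hx2, hx1⟩
    choose u hu1 hu2 using fun n : ℕ => happrox (1 / (n + 1)) (by positivity)
    -- find a tauQ-cluster point of the sequence u in K
    letI := tauQ q
    have hle : Filter.map u Filter.atTop ≤ Filter.principal K := by
      rw [Filter.le_principal_iff, Filter.mem_map]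
      exact Filter.Eventually.of_forall hu1
    obtain ⟨a, haK, hacl⟩ := hK hle
    refine ⟨a, haK, ?_⟩
    by_contra hne
    have hpos : 0 < q (y - a) := lt_of_le_of_ne (hq0 _) (Ne.symm hne)
    set ε := q (y - a) / 3 with hεdef
    have hεpos : 0 < ε := by positivity
    obtain ⟨N, hN⟩ := exists_nat_gt (1 / ε)
    -- the ball around a is a neighborhood of a in tauQ
    have hballopen : (tauQ q).IsOpen (asymBall q a ε) :=
      TopologicalSpace.GenerateOpen.basic _ ⟨a, ε, hεpos, rfl⟩
    have hain : a ∈ asymBall q a ε := by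
      show q (a - a) < ε
      simp [hq00, sub_self, hεpos]
    have hnb : asymBall q a ε ∈ @nhds X (tauQ q) a :=
      IsOpen.mem_nhds (show IsOpen (asymBall q a ε) from hballopen) hain
    -- cluster point: frequently in the ball
    have hfreq : ∀ V ∈ Filter.map u Filter.atTop, (asymBall q a ε ∩ V).Nonempty :=
      fun V hV => hacl.nonempty_of_mem
        (Filter.inter_mem (Filter.mem_inf_of_left hnb) (Filter.mem_inf_of_right hV))
    have hVmem : u '' Set.Ici N ∈ Filter.map u Filter.atTop := by
      rw [Filter.mem_map]
      filter_upwards [Filter.mem_atTop N] with n hn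
      exact ⟨n, hn, rfl⟩
    obtain ⟨z, hz1, n, hn, rfl⟩ := hfreq _ hVmem
    have h1 : q (u n - a) < ε := hz1
    have h2 : q (y - u n) < ε := by
      have hle2 : q (y - u n) ≤ qs q (u n - y) := by
        have : q (-(u n - y)) ≤ qs q (u n - y) := le_max_right _ _
        simpa [neg_sub] using this
      have hlt : qs q (u n - y) < 1 / (n + 1) := hu2 n
      have hsmall : (1 : ℝ) / (n + 1) < ε := by
        rw [div_lt_iff₀ (by positivity)]
        rw [div_lt_iff₀ hεpos] at hN
        have hNn : (N : ℝ) ≤ (n : ℝ) := Nat.cast_le.mpr hn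
        nlinarith
      linarith
    have htr : q (y - a) ≤ q (y - u n) + q (u n - a) := by
      have := hqtri (y - u n) (u n - a)
      simpa [sub_add_sub_cancel] using this
    have : q (y - a) < 2 * ε := by linarith
    rw [hεdef] at this
    linarith
  -- finite subcover argument
  letI := tauQ q
  rw [isCompact_iff_finite_subcover]
  intro ι U hUo hcov
  have hKsub : K ⊆ ⋃ i, U i := (@subset_closure X (tauQs q) K).trans hcov
  obtain ⟨t, ht⟩ := hK.elim_finite_subcover U hUo hKsub
  refine ⟨t, fun y hy => ?_⟩
  obtain ⟨a, haK, hqya⟩ := hclsub y hy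
  have haV := ht haK
  simp only [Set.mem_iUnion] at haV ⊢
  obtain ⟨i, hi, haV⟩ := haV
  obtain ⟨ε, hε, hsub⟩ := hball (U i) (hUo i) a haV
  exact ⟨i, hi, hsub (show q (y - a) < ε by rw [hqya]; exact hε)⟩
end

section
/- If K ⊆ X is q-compact, then K contains no line; that is, there do not exist z ∈ X and y ∈ X with y ≠ 0 such that {z + t•y : t ∈ ℝ} ⊆ K. -/
open Set Pointwise

theorem stmt7 {X : Type*} [AddCommGroup X] [Module ℝ X] (q : X → ℝ)
    (hq0 : ∀ x, 0 ≤ q x)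
    (hqh : ∀ (t : ℝ) (x : X), 0 ≤ t → q (t • x) = t * q x)
    (hqtri : ∀ x y, q (x + y) ≤ q x + q y)
    (hqsep : ∀ x, (q x = 0 ∧ q (-x) = 0) ↔ x = 0)
    (K : Set X) (hK : @IsCompact X (tauQ q) K) :
    ¬ ∃ (z y : X), y ≠ 0 ∧ {p | ∃ t : ℝ, p = z + t • y} ⊆ K := by
  rintro ⟨z, y, hy, hline⟩
  letI := tauQ q
  obtain ⟨c, hc, hcK⟩ : ∃ c : X, 0 < q c ∧ ∀ t : ℝ, z + t • c ∈ K := by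
    rcases lt_or_eq_of_le (hq0 y) with h | h
    · exact ⟨y, h, fun t => hline ⟨t, rfl⟩⟩
    · refine ⟨-y, ?_, fun t => hline ⟨-t, by simp⟩⟩
      rcases lt_or_eq_of_le (hq0 (-y)) with h' | h'
      · exact h'
      · exact absurd ((hqsep y).mp ⟨h.symm, h'.symm⟩) hy
  have hopen : ∀ n : ℕ, IsOpen (asymBall q z (n + 1)) := fun n =>
    TopologicalSpace.isOpen_generateFrom_of_mem ⟨z, n + 1, by positivity, rfl⟩
  have hcover : K ⊆ ⋃ n : ℕ, asymBall q z (n + 1) := by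
    intro u _
    obtain ⟨n, hn⟩ := exists_nat_gt (q (u - z))
    exact mem_iUnion.mpr ⟨n, by simpa [asymBall] using hn.trans_le (by linarith)⟩
  obtain ⟨s, hs⟩ := hK.elim_finite_subcover _ hopen hcover
  set M : ℕ := s.sup id with hM
  set t : ℝ := (M + 1) / q c with ht
  have ht0 : 0 ≤ t := by positivity
  have hqp : q (z + t • c - z) = M + 1 := by
    have : z + t • c - z = t • c := by abel
    rw [this, hqh t c ht0, ht, div_mul_cancel₀]
    exact hc.ne'
  have hpK := hs (hcK t)
  obtain ⟨n, hns, hn⟩ := mem_iUnion₂.mp hpK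
  have hball : q (z + t • c - z) < n + 1 := hn
  have hnM : (n : ℝ) ≤ M := by exact_mod_cast Finset.le_sup (f := id) hns
  rw [hqp] at hball
  linarith
end

section
/- If for some x, y, z ∈ X and ε > 0 the ray R = {t•x + y : t ≥ 0} is contained in the open ball B_q(z,ε), then the ray R' = {t•x : t ≥ 0} is contained in θ(0). -/
open Set Pointwise

theorem stmt11 {X : Type*} [AddCommGroup X] [Module ℝ X] (q : X → ℝ)
    (hq0 : ∀ x, 0 ≤ q x)
    (hqh : ∀ (t : ℝ) (x : X), 0 ≤ t → q (t • x) = t * q x)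
    (hqtri : ∀ x y, q (x + y) ≤ q x + q y)
    (hqsep : ∀ x, (q x = 0 ∧ q (-x) = 0) ↔ x = 0)
    (x y z : X) (ε : ℝ) (hε : 0 < ε)
    (hR : {p | ∃ t : ℝ, 0 ≤ t ∧ p = t • x + y} ⊆ asymBall q z ε) :
    {p | ∃ t : ℝ, 0 ≤ t ∧ p = t • x} ⊆ theta0 q := by
  have hqx : q x = 0 := by
    by_contra h
    have hx : 0 < q x := lt_of_le_of_ne (hq0 x) (Ne.symm h)
    -- pick t large
    set t := (ε + q (z - y)) / q x with ht
    have ht0 : 0 ≤ t := div_nonneg (add_nonneg hε.le (hq0 _)) hx.le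
    have hb : q (t • x + y - z) < ε := hR ⟨t, ht0, rfl⟩
    have : t * q x ≤ q (t • x + y - z) + q (z - y) := by
      calc t * q x = q (t • x) := (hqh t x ht0).symm
        _ = q ((t • x + y - z) + (z - y)) := by rw [show (t • x + y - z) + (z - y) = t • x by abel]
        _ ≤ q (t • x + y - z) + q (z - y) := hqtri _ _
    have ht' : t * q x = ε + q (z - y) := by
      rw [ht, div_mul_cancel₀ _ hx.ne']
    linarith
  rintro p ⟨t, ht0, rfl⟩
  show q (t • x) = 0
  rw [hqh t x ht0, hqx, mul_zero]
end

section
/- If K ⊆ X is q-compact and for some x, y ∈ X the ray R = {t•x + y : t ≥ 0} is contained in K, then the ray R' = {t•x : t ≥ 0} is contained in θ(0). -/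
open Set Pointwise

theorem stmt12 {X : Type*} [AddCommGroup X] [Module ℝ X] (q : X → ℝ)
    (hq0 : ∀ x, 0 ≤ q x)
    (hqh : ∀ (t : ℝ) (x : X), 0 ≤ t → q (t • x) = t * q x)
    (hqtri : ∀ x y, q (x + y) ≤ q x + q y)
    (hqsep : ∀ x, (q x = 0 ∧ q (-x) = 0) ↔ x = 0)
    (K : Set X) (hK : @IsCompact X (tauQ q) K) (x y : X)
    (hR : {p | ∃ t : ℝ, 0 ≤ t ∧ p = t • x + y} ⊆ K) :
    {p | ∃ t : ℝ, 0 ≤ t ∧ p = t • x} ⊆ theta0 q := by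
  intro w hw
  obtain ⟨t, ht, rfl⟩ := hw
  have hq00 : q (0 : X) = 0 := by
    have := hqh 0 x le_rfl; simpa using this
  suffices hqx : q x = 0 by
    show q (t • x) = 0
    rw [hqh t x ht, hqx, mul_zero]
  letI : TopologicalSpace X := tauQ q
  set P : ℕ → X := fun n => (n : ℝ) • x + y with hP
  have hpK : ∀ n, P n ∈ K := fun n => hR ⟨(n : ℝ), Nat.cast_nonneg n, rfl⟩
  have hfle : Filter.map P Filter.atTop ≤ Filter.principal K := by
    rw [Filter.le_principal_iff, Filter.mem_map]
    exact Filter.univ_mem' hpK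
  obtain ⟨z, hzK, hz⟩ := hK hfle
  have hfreq : ∀ N : ℕ, ∃ n ≥ N, q (P n - z) < 1 := by
    have hball : asymBall q z 1 ∈ nhds z := by
      refine IsOpen.mem_nhds ?_ ?_
      · exact TopologicalSpace.isOpen_generateFrom_of_mem ⟨z, 1, one_pos, rfl⟩
      · show q (z - z) < 1
        simpa [hq00] using one_pos
    have := ((nhds z).basis_sets.clusterPt_iff_frequently.mp hz) _ hball
    rw [Filter.frequently_map] at this
    intro N
    rcases (Filter.frequently_atTop.mp this) N with ⟨n, hn, hmem⟩
    exact ⟨n, hn, hmem⟩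
  by_contra hne
  have hpos : 0 < q x := lt_of_le_of_ne (hq0 x) (Ne.symm hne)
  obtain ⟨n, hn, hlt⟩ := hfreq (⌈(1 + q (z - y)) / q x⌉₊ + 1)
  have key : (n : ℝ) * q x ≤ q (P n - z) + q (z - y) := by
    have h1 : (n : ℝ) • x = (P n - z) + (z - y) := by
      simp [hP]
    calc (n : ℝ) * q x = q ((n : ℝ) • x) := (hqh _ x (Nat.cast_nonneg n)).symm
    _ = q ((P n - z) + (z - y)) := by rw [h1]
    _ ≤ q (P n - z) + q (z - y) := hqtri _ _
  have h2 : (n : ℝ) * q x < 1 + q (z - y) := by linarith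
  have h3 : (1 + q (z - y)) / q x < (n : ℝ) := by
    calc (1 + q (z - y)) / q x ≤ (⌈(1 + q (z - y)) / q x⌉₊ : ℝ) := Nat.le_ceil _
    _ < (n : ℝ) := by exact_mod_cast Nat.lt_of_succ_le hn
  have h4 : 1 + q (z - y) < (n : ℝ) * q x := (div_lt_iff₀ hpos).mp h3
  linarith
end

section
/- If K ⊆ X is q-compact, then the set K + θ(0) = {k + w : k ∈ K, w ∈ θ(0)} is closed in the topology τ_{q^s}. -/
open Set Pointwise

theorem stmt13 {X : Type*} [AddCommGroup X] [Module ℝ X] (q : X → ℝ)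
    (hq0 : ∀ x, 0 ≤ q x)
    (hqh : ∀ (t : ℝ) (x : X), 0 ≤ t → q (t • x) = t * q x)
    (hqtri : ∀ x y, q (x + y) ≤ q x + q y)
    (hqsep : ∀ x, (q x = 0 ∧ q (-x) = 0) ↔ x = 0)
    (K : Set X) (hK : @IsCompact X (tauQ q) K) :
    @IsClosed X (tauQs q) (K + theta0 q) := by
  have hq00 : q 0 = 0 := by
    have := hqh 0 0 le_rfl
    simpa using this
  letI : TopologicalSpace X := tauQs q
  rw [← isOpen_compl_iff]
  rcases K.eq_empty_or_nonempty with hKe | hKne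
  · simp only [hKe, Set.empty_add, Set.compl_empty]
    exact isOpen_univ
  have key : ∀ x ∈ (K + theta0 q)ᶜ, ∃ ε > 0, {y | qs q (y - x) < ε} ⊆ (K + theta0 q)ᶜ := by
    intro x hx
    have hpos : ∀ k ∈ K, 0 < q (x - k) := by
      intro k hk
      rcases (hq0 (x - k)).lt_or_eq with h | h
      · exact h
      · exact absurd (Set.mem_add.2 ⟨k, hk, x - k, h.symm, by abel⟩) hx
    set U : K → Set X := fun k => asymBall q k.1 (q (x - k.1) / 2) with hUdef
    have hUopen : ∀ k : K, @IsOpen X (tauQ q) (U k) := fun k =>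
      TopologicalSpace.GenerateOpen.basic _ ⟨k.1, q (x - k.1) / 2, half_pos (hpos k.1 k.2), rfl⟩
    have hcover : K ⊆ ⋃ k : K, U k := by
      intro k hk
      refine Set.mem_iUnion.2 ⟨⟨k, hk⟩, ?_⟩
      show q (k - k) < _
      rw [sub_self, hq00]
      exact half_pos (hpos k hk)
    obtain ⟨t, ht⟩ := @IsCompact.elim_finite_subcover X (tauQ q) K K hK U hUopen hcover
    obtain ⟨k0, hk0⟩ := hKne
    have htne : t.Nonempty := by
      rcases Set.mem_iUnion₂.1 (ht hk0) with ⟨i, hi, _⟩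
      exact ⟨i, hi⟩
    set ε := t.inf' htne (fun i => q (x - i.1) / 2) with hεdef
    have hε : 0 < ε := by
      rw [hεdef, Finset.lt_inf'_iff]
      exact fun i hi => half_pos (hpos i.1 i.2)
    refine ⟨ε, hε, ?_⟩
    intro y hy hyK
    rcases Set.mem_add.1 hyK with ⟨k, hk, w, hw, hkw⟩
    rcases Set.mem_iUnion₂.1 (ht hk) with ⟨i, hi, hki⟩
    have hki' : q (k - i.1) < q (x - i.1) / 2 := hki
    have h1 : q (x - y) < ε := by
      have : q (x - y) ≤ qs q (y - x) := by
        rw [qs, neg_sub]; exact le_max_right _ _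
      exact lt_of_le_of_lt this hy
    have h2 : q (y - k) = 0 := by
      have : y - k = w := by rw [← hkw]; abel
      rw [this]; exact hw
    have hεi : ε ≤ q (x - i.1) / 2 := Finset.inf'_le _ hi
    have t1 : q (x - i.1) ≤ q (x - y) + q (y - i.1) := by
      have := hqtri (x - y) (y - i.1)
      have e : (x - y) + (y - i.1) = x - i.1 := by abel
      rwa [e] at this
    have t2 : q (y - i.1) ≤ q (y - k) + q (k - i.1) := by
      have := hqtri (y - k) (k - i.1)
      have e : (y - k) + (k - i.1) = y - i.1 := by abel
      rwa [e] at this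
    linarith
  choose! ε hεpos hsub using key
  have hU : (K + theta0 q)ᶜ = ⋃ x ∈ (K + theta0 q)ᶜ, {y | qs q (y - x) < ε x} := by
    ext y
    constructor
    · intro hy
      refine Set.mem_iUnion₂.2 ⟨y, hy, ?_⟩
      show qs q (y - y) < ε y
      rw [sub_self]
      have : qs q 0 = 0 := by simp [qs, hq00]
      rw [this]
      exact hεpos y hy
    · intro hy
      rcases Set.mem_iUnion₂.1 hy with ⟨x, hx, hyx⟩
      exact hsub x hx hyx
  rw [hU]
  exact isOpen_iUnion fun x => isOpen_iUnion fun hx =>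
    TopologicalSpace.GenerateOpen.basic _ ⟨x, ε x, hεpos x hx, rfl⟩
end

section
/- If K ⊆ X is a q-compact convex set, then every extreme point of the convex set K + θ(0) belongs to K. -/
open Set Pointwise

theorem stmt14 {X : Type*} [AddCommGroup X] [Module ℝ X] (q : X → ℝ)
    (hq0 : ∀ x, 0 ≤ q x)
    (hqh : ∀ (t : ℝ) (x : X), 0 ≤ t → q (t • x) = t * q x)
    (hqtri : ∀ x y, q (x + y) ≤ q x + q y)
    (hqsep : ∀ x, (q x = 0 ∧ q (-x) = 0) ↔ x = 0)
    (K : Set X) (hK : @IsCompact X (tauQ q) K) (hconv : Convex ℝ K) :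
    ∀ x, IsExtremePt (K + theta0 q) x → x ∈ K := by
  rintro x ⟨hx, hext⟩
  obtain ⟨k, hk, w, hw, rfl⟩ := hx
  have hq00 : q 0 = 0 := by
    have := hqh 0 0 le_rfl; simpa using this
  have h0 : (0 : X) ∈ theta0 q := hq00
  have h2w : (2 : ℝ) • w ∈ theta0 q := by
    have := hqh 2 w (by norm_num)
    simp only [theta0, Set.mem_setOf_eq] at hw ⊢
    rw [this, hw, mul_zero]
  have hkmem : k ∈ K + theta0 q := ⟨k, hk, 0, h0, by simp⟩
  have hk2w : k + (2 : ℝ) • w ∈ K + theta0 q := ⟨k, hk, (2 : ℝ) • w, h2w, rfl⟩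
  have heq : k + w = (1/2 : ℝ) • k + (1 - 1/2 : ℝ) • (k + (2 : ℝ) • w) := by
    rw [smul_add, smul_smul]
    norm_num
    module
  have := hext k hkmem (k + (2 : ℝ) • w) hk2w (1/2) (by norm_num) (by norm_num) heq
  rw [this.1]; exact hk
end

section
/- Let K ⊆ X be a nonempty q-compact convex set such that the set K + θ(0), equipped with the subspace topology inherited from τ_{q^s}, is locally compact. Then K has at least one extreme point. -/
open Set Pointwise

/-- A finite subset of a chain (under `⊆`) admits a lower bound in the chain below a
given element. -/
lemma exists_chain_min {α : Type*} {c : Set (Set α)} (hc : IsChain (· ⊆ ·) c)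
    (F₀ : Set α) (hF₀ : F₀ ∈ c) (u : Finset (Set α)) (hu : ∀ F ∈ u, F ∈ c) :
    ∃ m ∈ c, m ⊆ F₀ ∧ ∀ F ∈ u, m ⊆ F := by
  classical
  induction u using Finset.induction_on with
  | empty => exact ⟨F₀, hF₀, subset_rfl, by simp⟩
  | @insert a u ha ih =>
    obtain ⟨m, hm, hmF₀, hmu⟩ := ih (fun F hF => hu F (Finset.mem_insert_of_mem hF))
    have hac : a ∈ c := hu a (Finset.mem_insert_self a u)
    rcases eq_or_ne m a with rfl | hne
    · exact ⟨m, hm, hmF₀, fun F hF => by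
        rcases Finset.mem_insert.1 hF with rfl | hF
        · exact subset_rfl
        · exact hmu F hF⟩
    · rcases hc hm hac hne with h | h
      · exact ⟨m, hm, hmF₀, fun F hF => by
          rcases Finset.mem_insert.1 hF with rfl | hF
          · exact h
          · exact hmu F hF⟩
      · exact ⟨a, hac, h.trans hmF₀, fun F hF => by
          rcases Finset.mem_insert.1 hF with rfl | hF
          · exact subset_rfl
          · exact h.trans (hmu F hF)⟩

theorem stmt15 {X : Type*} [AddCommGroup X] [Module ℝ X] (q : X → ℝ)
    (hq0 : ∀ x, 0 ≤ q x)
    (hqh : ∀ (t : ℝ) (x : X), 0 ≤ t → q (t • x) = t * q x)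
    (hqtri : ∀ x y, q (x + y) ≤ q x + q y)
    (hqsep : ∀ x, (q x = 0 ∧ q (-x) = 0) ↔ x = 0)
    (K : Set X) (hne : K.Nonempty) (hK : @IsCompact X (tauQ q) K) (hconv : Convex ℝ K)
    (hlc : @LocallyCompactSpace (K + theta0 q : Set X)
      (TopologicalSpace.induced Subtype.val (tauQs q))) :
    ∃ x, IsExtremePt K x := by
  classical
  letI : TopologicalSpace X := tauQ q
  have hK' : IsCompact K := hK
  have hq00 : q 0 = 0 := by
    have := hqh 0 (0 : X) le_rfl
    simpa using this
  -- balls are open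
  have hball : ∀ (x : X) (ε : ℝ), 0 < ε → IsOpen (asymBall q x ε) := fun x ε hε =>
    TopologicalSpace.isOpen_generateFrom_of_mem ⟨x, ε, hε, rfl⟩
  -- any linear functional dominated by q is upper semicontinuous
  have hopen : ∀ (g : X →ₗ[ℝ] ℝ), (∀ x, g x ≤ q x) → ∀ r : ℝ, IsOpen {x | g x < r} := by
    intro g hg r
    have : {x | g x < r} = ⋃ x ∈ {x | g x < r}, asymBall q x (r - g x) := by
      ext w
      constructor
      · intro hw
        refine Set.mem_biUnion hw ?_
        simp only [asymBall, Set.mem_setOf_eq, sub_self, hq00]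
        linarith [Set.mem_setOf_eq ▸ hw]
      · intro hw
        rcases Set.mem_iUnion₂.1 hw with ⟨x, hx, hwx⟩
        have h1 : q (w - x) < r - g x := hwx
        have h2 : g (w - x) ≤ q (w - x) := hg _
        have h3 : g w - g x = g (w - x) := (map_sub g w x).symm
        simp only [Set.mem_setOf_eq]
        linarith
    rw [this]
    exact isOpen_biUnion fun x hx => hball x _ (by linarith [Set.mem_setOf_eq ▸ hx])
  -- the family of nonempty, relatively closed, extreme subsets of K
  set S : Set (Set X) := {F | F.Nonempty ∧ F ⊆ K ∧ K ∩ closure F ⊆ F ∧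
    ∀ y ∈ K, ∀ z ∈ K, ∀ l : ℝ, 0 < l → l < 1 → l • y + (1 - l) • z ∈ F → y ∈ F ∧ z ∈ F}
    with hS
  have hKS : K ∈ S := ⟨hne, subset_rfl, Set.inter_subset_left, fun y hy z hz _ _ _ _ => ⟨hy, hz⟩⟩
  -- elements of S are compact
  have hcomp : ∀ F ∈ S, IsCompact F := by
    rintro F ⟨_, hFK, hFcl, _⟩
    have : F = K ∩ closure F :=
      Set.Subset.antisymm (Set.subset_inter hFK subset_closure) hFcl
    rw [this]
    exact hK'.inter_right isClosed_closure
  -- Zorn's lemma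
  have Hchain : ∀ c ⊆ S, IsChain (· ⊆ ·) c → c.Nonempty → ∃ lb ∈ S, ∀ s ∈ c, lb ⊆ s := by
    intro c hcS hchain hcne
    obtain ⟨F₀, hF₀c⟩ := hcne
    have hF₀S := hcS hF₀c
    refine ⟨⋂₀ c, ?_, fun s hs => Set.sInter_subset_of_mem hs⟩
    have hsub : F₀ ∩ ⋂ (F : c), closure (F : Set X) ⊆ ⋂₀ c := by
      intro x hx
      intro F hF
      have hxK : x ∈ K := (hcS hF₀c).2.1 hx.1
      have hxcl : x ∈ closure F := by
        have := hx.2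
        exact Set.mem_iInter.1 this ⟨F, hF⟩
      exact (hcS hF).2.2.1 ⟨hxK, hxcl⟩
    have hnon : (F₀ ∩ ⋂ (F : c), closure (F : Set X)).Nonempty := by
      refine (hcomp F₀ hF₀S).inter_iInter_nonempty _ (fun F => isClosed_closure) ?_
      intro u
      obtain ⟨mF, hmFc, hmF₀, hmFu⟩ := exists_chain_min hchain F₀ hF₀c
        (u.image Subtype.val) (by
          intro F hF
          rcases Finset.mem_image.1 hF with ⟨G, -, rfl⟩
          exact G.2)
      obtain ⟨a, ha⟩ := (hcS hmFc).1
      refine ⟨a, hmF₀ ha, ?_⟩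
      refine Set.mem_iInter₂.2 fun F hF => ?_
      exact subset_closure (hmFu _ (Finset.mem_image_of_mem _ hF) ha)
    have hmne : (⋂₀ c).Nonempty := hnon.mono hsub
    refine ⟨hmne, ?_, ?_, ?_⟩
    · exact (Set.sInter_subset_of_mem hF₀c).trans (hcS hF₀c).2.1
    · intro x hx
      intro F hF
      have : closure (⋂₀ c) ⊆ closure F := closure_mono (Set.sInter_subset_of_mem hF)
      exact (hcS hF).2.2.1 ⟨hx.1, this hx.2⟩
    · intro y hy z hz l hl0 hl1 hmem
      constructor <;> intro F hF
      · exact ((hcS hF).2.2.2 y hy z hz l hl0 hl1 (hmem F hF)).1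
      · exact ((hcS hF).2.2.2 y hy z hz l hl0 hl1 (hmem F hF)).2
  obtain ⟨m, -, hmin⟩ := zorn_superset_nonempty S Hchain K hKS
  -- m is a minimal element of S; show it is a singleton
  obtain ⟨hmne, hmK, hmcl, hmext⟩ := hmin.prop
  obtain ⟨a, ha⟩ := hmne
  have huniq : ∀ y ∈ m, ∀ z ∈ m, y = z := by
    by_contra hcon
    push_neg at hcon
    obtain ⟨y, hy, z, hz, hyz⟩ := hcon
    -- find p₁ p₂ ∈ m with q (p₁ - p₂) > 0
    obtain ⟨p₁, p₂, hp₁, hp₂, hppos⟩ :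
        ∃ p₁ p₂, p₁ ∈ m ∧ p₂ ∈ m ∧ 0 < q (p₁ - p₂) := by
      have hne0 : y - z ≠ 0 := sub_ne_zero.2 hyz
      have hnot : ¬ (q (y - z) = 0 ∧ q (-(y - z)) = 0) := fun h => hne0 ((hqsep _).1 h)
      rw [neg_sub] at hnot
      by_cases h1 : q (y - z) = 0
      · refine ⟨z, y, hz, hy, ?_⟩
        rcases (hq0 (z - y)).lt_or_eq with h | h
        · exact h
        · exact absurd ⟨h1, h.symm⟩ hnot
      · exact ⟨y, z, hy, hz, (hq0 (y - z)).lt_of_ne (Ne.symm h1)⟩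
    set v := p₁ - p₂ with hv
    have hv0 : v ≠ 0 := by
      intro h
      rw [h, hq00] at hppos
      exact lt_irrefl 0 hppos
    -- Hahn-Banach: extend t • v ↦ t * q v to g ≤ q
    obtain ⟨g, hgext, hgle⟩ :
        ∃ g : X →ₗ[ℝ] ℝ,
          (∀ x : (LinearPMap.mkSpanSingleton (K := ℝ) v (q v) hv0).domain,
            g x = LinearPMap.mkSpanSingleton (K := ℝ) v (q v) hv0 x) ∧ ∀ x, g x ≤ q x := by
      refine exists_extension_of_le_sublinear _ q (fun c hc x => hqh c x hc.le) hqtri ?_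
      rintro ⟨x, hx⟩
      obtain ⟨t, rfl⟩ := Submodule.mem_span_singleton.1 hx
      have happ : LinearPMap.mkSpanSingleton (K := ℝ) v (q v) hv0 ⟨t • v, hx⟩ = t • q v :=
        LinearPMap.mkSpanSingleton'_apply _ _ _ t _
      rw [happ]
      rcases le_or_gt 0 t with ht | ht
      · rw [hqh t v ht]; simp [smul_eq_mul]
      · have : t • q v ≤ 0 := smul_nonpos_of_nonpos_of_nonneg ht.le (hq0 v)
        exact this.trans (hq0 _)
    have hgv : g v = q v := by
      have h1 := hgext ⟨v, Submodule.mem_span_singleton_self v⟩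
      rw [LinearPMap.mkSpanSingleton_apply] at h1
      exact h1
    -- g attains its maximum M on the compact set m
    have hmc : IsCompact m := hcomp m hmin.prop
    obtain ⟨y₀, hy₀m, hy₀max⟩ : ∃ y₀ ∈ m, ∀ x ∈ m, g x ≤ g y₀ := by
      by_contra hno
      push_neg at hno
      have hcover : m ⊆ ⋃ x ∈ m, {w | g w < g x} := by
        intro w hw
        obtain ⟨x, hx, hwx⟩ := hno w hw
        exact Set.mem_biUnion hx hwx
      obtain ⟨t, htm, htfin, htcover⟩ :=
        hmc.elim_finite_subcover_image (fun x _ => hopen g hgle (g x)) hcover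
      have htne : t.Nonempty := by
        rcases Set.mem_iUnion₂.1 (htcover ha) with ⟨x, hx, -⟩
        exact ⟨x, hx⟩
      obtain ⟨x₀, hx₀t, hx₀max⟩ := Set.Finite.exists_maximalFor g t htfin htne
      rcases Set.mem_iUnion₂.1 (htcover (htm hx₀t)) with ⟨x, hxt, hx⟩
      have h1 : g x₀ < g x := hx
      have h2 : g x₀ = g x := le_antisymm h1.le (hx₀max hxt h1.le)
      exact lt_irrefl _ (h2 ▸ h1)
    set M := g y₀ with hM
    -- the argmax set is a smaller member of S
    set m' : Set X := {x | x ∈ m ∧ M ≤ g x} with hm'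
    have hm'S : m' ∈ S := by
      refine ⟨⟨y₀, hy₀m, le_rfl⟩, fun x hx => hmK hx.1, ?_, ?_⟩
      · -- relatively closed
        have hclosed : IsClosed {x | M ≤ g x} := by
          have : {x | M ≤ g x} = {x | g x < M}ᶜ := by
            ext x; simp [not_lt]
          rw [this]
          exact (hopen g hgle M).isClosed_compl
        have hsub : closure m' ⊆ closure m ∩ {x | M ≤ g x} := by
          apply closure_minimal
          · exact fun x hx => ⟨subset_closure hx.1, hx.2⟩
          · exact isClosed_closure.inter hclosed
        intro x hx
        have h1 := hsub hx.2
        exact ⟨hmcl ⟨hx.1, h1.1⟩, h1.2⟩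
      · -- extreme
        intro yy hyy zz hzz l hl0 hl1 hmem
        have hymem : yy ∈ m ∧ zz ∈ m := hmext yy hyy zz hzz l hl0 hl1 hmem.1
        have hgy : g yy ≤ M := hy₀max yy hymem.1
        have hgz : g zz ≤ M := hy₀max zz hymem.2
        have hgc : M ≤ l * g yy + (1 - l) * g zz := by
          have := hmem.2
          simpa [map_add, map_smul, smul_eq_mul] using this
        constructor
        · exact ⟨hymem.1, by nlinarith⟩
        · exact ⟨hymem.2, by nlinarith⟩
    have hmsub : m ⊆ m' := hmin.2 hm'S (fun x hx => hx.1)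
    -- contradiction: g p₁ > g p₂ but both are argmax
    have h1 : g p₁ - g p₂ = q v := by rw [← hgv, ← map_sub]
    have h2 : M ≤ g p₂ := (hmsub hp₂).2
    have h3 : g p₁ ≤ M := hy₀max p₁ hp₁
    linarith
  refine ⟨a, hmK ha, ?_⟩
  intro y hy z hz l hl0 hl1 heq
  have := hmext y hy z hz l hl0 hl1 (heq ▸ ha)
  exact ⟨huniq a ha y this.1, huniq a ha z this.2⟩
end

section
/- Let X be finite dimensional over ℝ and let K ⊆ X be a nonempty q-compact convex set. Let E(K) denote the set of extreme points of K + θ(0) and S(K) the convex hull of E(K). Then S(K) ⊆ K ⊆ S(K) + θ(0), and moreover S(K) + θ(0) = K + θ(0). -/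
open Set Pointwise

namespace Stmt17Aux

section basic
variable {E : Type*} [AddCommGroup E] [Module ℝ E]

def recCone (A : Set E) : Set E := {v | ∀ x ∈ A, ∀ t : ℝ, 0 ≤ t → x + t • v ∈ A}

theorem zero_mem_recCone (A : Set E) : (0 : E) ∈ recCone A := by
  intro x hx t ht; simpa using hx

theorem recCone_add {A : Set E} {v w : E} (hv : v ∈ recCone A) (hw : w ∈ recCone A) :
    v + w ∈ recCone A := by
  intro x hx t ht
  have := hw _ (hv x hx t ht) t ht
  simpa [smul_add, add_assoc] using this

theorem recCone_smul {A : Set E} {v : E} (hv : v ∈ recCone A) {c : ℝ} (hc : 0 ≤ c) :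
    c • v ∈ recCone A := by
  intro x hx t ht
  have := hv x hx (t * c) (mul_nonneg ht hc)
  simpa [smul_smul] using this

theorem recCone_convex (A : Set E) : Convex ℝ (recCone A) := by
  intro v hv w hw a b ha hb hab
  exact recCone_add (recCone_smul hv ha) (recCone_smul hw hb)

end basic

variable {E : Type*} [NormedAddCommGroup E] [NormedSpace ℝ E]

theorem mem_recCone_of_ray {A : Set E} (hA : IsClosed A) (hconv : Convex ℝ A) {x₀ v : E}
    (h : ∀ t : ℝ, 0 ≤ t → x₀ + t • v ∈ A) : v ∈ recCone A := by
  intro y hy t ht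
  rcases eq_or_lt_of_le ht with rfl | htpos
  · simpa using hy
  set s : ℕ → ℝ := fun m => t + m + 1 with hs
  have hspos : ∀ m, 0 < s m := by
    intro m
    have : (0:ℝ) ≤ m := Nat.cast_nonneg m
    simp only [hs]
    linarith
  have hts : ∀ m, t ≤ s m := by
    intro m
    have : (0:ℝ) ≤ m := Nat.cast_nonneg m
    simp only [hs]; linarith
  have hmem : ∀ m : ℕ, (1 - t / s m) • y + (t / s m) • (x₀ + s m • v) ∈ A := by
    intro m
    have h1 : 0 ≤ t / s m := div_nonneg ht (hspos m).le
    have h2 : t / s m ≤ 1 := (div_le_one (hspos m)).2 (hts m)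
    exact hconv hy (h (s m) (hspos m).le) (by linarith) h1 (by ring)
  have heq : ∀ m : ℕ, (1 - t / s m) • y + (t / s m) • (x₀ + s m • v)
      = y + (t / s m) • (x₀ - y) + t • v := by
    intro m
    have hne : s m ≠ 0 := (hspos m).ne'
    have : (t / s m) • (s m • v) = t • v := by
      rw [smul_smul, div_mul_cancel₀ _ hne]
    rw [smul_add, this]
    module
  have htend : Filter.Tendsto (fun m : ℕ => y + (t / s m) • (x₀ - y) + t • v)
      Filter.atTop (nhds (y + t • v)) := by
    have hs_tend : Filter.Tendsto s Filter.atTop Filter.atTop := by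
      have h1 : Filter.Tendsto (fun m : ℕ => (m : ℝ)) Filter.atTop Filter.atTop :=
        tendsto_natCast_atTop_atTop
      have h2 : Filter.Tendsto (fun m : ℕ => (m:ℝ) + (t+1)) Filter.atTop Filter.atTop :=
        h1.atTop_add tendsto_const_nhds
      have : s = fun m : ℕ => (m:ℝ) + (t+1) := by funext m; simp [hs]; ring
      rw [this]; exact h2
    have hdiv : Filter.Tendsto (fun m => t / s m) Filter.atTop (nhds 0) :=
      Filter.Tendsto.div_atTop tendsto_const_nhds hs_tend
    have hsmul : Filter.Tendsto (fun m => (t / s m) • (x₀ - y)) Filter.atTop (nhds 0) := by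
      simpa using hdiv.smul_const (x₀ - y)
    have := (tendsto_const_nhds (x := y)).add hsmul |>.add (tendsto_const_nhds (x := t • v))
    simpa using this
  apply hA.mem_of_tendsto htend
  filter_upwards with m
  rw [← heq m]
  exact hmem m

/-- Transport lemma: if everything of `A` lives in the affine subspace `x₀ + W` and the
Klee property holds in `W`, then it holds for `A`. -/
theorem transport {A : Set E} (hA : IsClosed A) (hconv : Convex ℝ A)
    (W : Submodule ℝ E) {x₀ : E} (hx₀ : x₀ ∈ A) (hsub : ∀ a ∈ A, a - x₀ ∈ W)
    (hIH : ∀ B : Set W, IsClosed B → Convex ℝ B →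
      (∀ v ∈ recCone B, -v ∈ recCone B → v = 0) →
      B ⊆ convexHull ℝ {w | IsExtremePt B w} + recCone B)
    (hpt : ∀ v ∈ recCone A, -v ∈ recCone A → v = 0) :
    A ⊆ convexHull ℝ {x | IsExtremePt A x} + recCone A := by
  intro x hx
  set B : Set W := {w : W | x₀ + (w : E) ∈ A} with hBdef
  have hBclosed : IsClosed B :=
    hA.preimage (continuous_const.add continuous_subtype_val)
  have hBconv : Convex ℝ B := by
    intro u hu v hv a b ha hb hab
    have : x₀ + ((a • u + b • v : W) : E) = a • (x₀ + (u:E)) + b • (x₀ + (v:E)) := by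
      push_cast
      have h1 : a • x₀ + b • x₀ = x₀ := by rw [← add_smul, hab, one_smul]
      rw [smul_add, smul_add, ← add_assoc]
      rw [show a • x₀ + a • (u:E) + (b • x₀ + b • (v:E))
            = (a • x₀ + b • x₀) + (a • (u:E) + b • (v:E)) by abel, h1]
      abel
    show x₀ + ((a • u + b • v : W) : E) ∈ A
    rw [this]
    exact hconv hu hv ha hb hab
  have h0B : (0 : W) ∈ B := by simpa [hBdef] using hx₀
  have hcoe_rec : ∀ w : W, w ∈ recCone B → (w : E) ∈ recCone A := by
    intro w hw
    apply mem_recCone_of_ray hA hconv (x₀ := x₀)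
    intro t ht
    have := hw 0 h0B t ht
    simpa [hBdef] using this
  have hBpt : ∀ v ∈ recCone B, -v ∈ recCone B → v = 0 := by
    intro v hv hnv
    have h1 := hcoe_rec v hv
    have h2 := hcoe_rec (-v) hnv
    have : (v : E) = 0 := hpt _ h1 (by simpa using h2)
    exact Subtype.ext this
  have hxB : (⟨x - x₀, hsub x hx⟩ : W) ∈ B := by
    show x₀ + (x - x₀) ∈ A
    convert hx using 1
    abel
  obtain ⟨sw, hsw, rw', hrw, hsum⟩ := Set.mem_add.1 (hIH B hBclosed hBconv hBpt hxB)
  -- x₀ + ↑sw ∈ convexHull of extreme points of A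
  set f : W → E := fun w => x₀ + (w : E) with hfdef
  have hfcomb : ∀ (u v : W) (a b : ℝ), a + b = 1 →
      f (a • u + b • v) = a • f u + b • f v := by
    intro u v a b hab
    simp only [hfdef]
    push_cast
    have h1 : a • x₀ + b • x₀ = x₀ := by rw [← add_smul, hab, one_smul]
    rw [smul_add, smul_add, show a • x₀ + a • (u:E) + (b • x₀ + b • (v:E))
          = (a • x₀ + b • x₀) + (a • (u:E) + b • (v:E)) by abel, h1]
  have hstep1 : f sw ∈ convexHull ℝ (f '' {w | IsExtremePt B w}) := by
    have : convexHull ℝ {w | IsExtremePt B w} ⊆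
        f ⁻¹' (convexHull ℝ (f '' {w | IsExtremePt B w})) := by
      apply convexHull_min
      · intro w hw
        exact subset_convexHull ℝ _ (mem_image_of_mem f hw)
      · intro u hu v hv a b ha hb hab
        simp only [Set.mem_preimage]
        rw [hfcomb u v a b hab]
        exact (convex_convexHull ℝ _) hu hv ha hb hab
    exact this hsw
  have hext : f '' {w | IsExtremePt B w} ⊆ {x | IsExtremePt A x} := by
    rintro - ⟨e, he, rfl⟩
    refine ⟨he.1, ?_⟩
    intro y hy z hz l hl0 hl1 heq
    have hy' : (⟨y - x₀, hsub y hy⟩ : W) ∈ B := by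
      show x₀ + (y - x₀) ∈ A
      convert hy using 1; abel
    have hz' : (⟨z - x₀, hsub z hz⟩ : W) ∈ B := by
      show x₀ + (z - x₀) ∈ A
      convert hz using 1; abel
    have hcoe : (e : E) = l • (y - x₀) + (1 - l) • (z - x₀) := by
      have h1 : x₀ + (e : E) = l • y + (1 - l) • z := heq
      have h2 : (e : E) = (l • y + (1 - l) • z) - x₀ := by rw [← h1]; abel
      rw [h2]; module
    have hcomb : e = l • (⟨y - x₀, hsub y hy⟩ : W) + (1 - l) • ⟨z - x₀, hsub z hz⟩ := by
      apply Subtype.ext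
      push_cast
      exact hcoe
    obtain ⟨he1, he2⟩ := he.2 _ hy' _ hz' l hl0 hl1 hcomb
    constructor
    · show x₀ + (e : E) = y
      rw [congrArg Subtype.val he1]; push_cast; module
    · show x₀ + (e : E) = z
      rw [congrArg Subtype.val he2]; push_cast; module
  have hfsw : f sw ∈ convexHull ℝ {x | IsExtremePt A x} :=
    convexHull_mono hext hstep1
  have hr : (rw' : E) ∈ recCone A := hcoe_rec _ hrw
  have hxeq : x = f sw + (rw' : E) := by
    have h1 : (sw : E) + (rw' : E) = x - x₀ := by
      have := congrArg Subtype.val hsum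
      push_cast at this
      exact this
    show x = (x₀ + (sw : E)) + (rw' : E)
    rw [add_assoc, h1]; abel
  rw [hxeq]
  exact add_mem_add hfsw hr


theorem subsingleton_case {A : Set E} [Subsingleton E] {x : E} (hx : x ∈ A) :
    x ∈ convexHull ℝ {x | IsExtremePt A x} + recCone A := by
  have hxe : IsExtremePt A x :=
    ⟨hx, fun y _ z _ l _ _ _ => ⟨Subsingleton.elim x y, Subsingleton.elim x z⟩⟩
  have := add_mem_add (subset_convexHull ℝ {x | IsExtremePt A x} hxe) (zero_mem_recCone A)
  simpa using this

end Stmt17Aux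

namespace Stmt17Aux

set_option maxHeartbeats 1000000 in
theorem klee : ∀ (n : ℕ) (E : Type*) [NormedAddCommGroup E] [NormedSpace ℝ E]
    [FiniteDimensional ℝ E], Module.finrank ℝ E ≤ n → ∀ A : Set E, IsClosed A → Convex ℝ A →
    (∀ v ∈ recCone A, -v ∈ recCone A → v = 0) →
    A ⊆ convexHull ℝ {x | IsExtremePt A x} + recCone A := by
  intro n
  induction n with
  | zero =>
    intro E _ _ _ hrank A hA hconv hpt x hx
    have : Module.finrank ℝ E = 0 := Nat.le_zero.1 hrank
    have : Subsingleton E := Module.finrank_zero_iff.1 this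
    exact subsingleton_case hx
  | succ n IH =>
    intro E _ _ _ hrank A hA hconv hpt x hx
    by_cases hspan : affineSpan ℝ A = ⊤
    case neg =>
      -- A lives in a proper affine subspace
      set W := vectorSpan ℝ A with hW
      have hWne : W ≠ ⊤ := by
        intro h
        exact hspan ((AffineSubspace.affineSpan_eq_top_iff_vectorSpan_eq_top_of_nonempty
          ℝ E E ⟨x, hx⟩).2 h)
      have hWrank : Module.finrank ℝ W ≤ n := by
        have := Submodule.finrank_lt (K := ℝ) (V := E) hWne
        omega
      refine transport hA hconv W hx (fun a ha => ?_) (fun B h1 h2 h3 => IH W hWrank B h1 h2 h3) hpt hx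
      simpa [vsub_eq_sub] using vsub_mem_vectorSpan ℝ ha hx
    case pos =>
      have hint : (interior A).Nonempty :=
        (hconv.interior_nonempty_iff_affineSpan_eq_top).2 hspan
      -- every non-interior point of A is in the target set
      have FR : ∀ p ∈ A, p ∉ interior A →
          p ∈ convexHull ℝ {x | IsExtremePt A x} + recCone A := by
        intro p hp hpint
        obtain ⟨f, hf⟩ := geometric_hahn_banach_open_point hconv.interior isOpen_interior hpint
        have hle : ∀ a ∈ A, f a ≤ f p := by
          intro a ha
          obtain ⟨w, hw⟩ := hint
          by_contra hgt
          push_neg at hgt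
          set d : ℝ := f a - f w with hd
          set D : ℝ := max d 1 with hD
          have hD1 : (1:ℝ) ≤ D := le_max_right _ _
          have hDpos : (0:ℝ) < D := lt_of_lt_of_le one_pos hD1
          set c : ℝ := f a - f p with hc
          have hcpos : 0 < c := sub_pos.2 hgt
          set t : ℝ := min 1 (c / (2 * D)) with ht
          have ht0 : 0 < t := lt_min one_pos (div_pos hcpos (by linarith))
          have ht1 : t ≤ 1 := min_le_left _ _
          have hmem : (1 - t) • a + t • w ∈ interior A :=
            hconv.combo_self_interior_mem_interior ha hw (by linarith) ht0 (by ring)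
          have hval : f ((1 - t) • a + t • w) = f a - t * d := by
            rw [map_add, map_smul, map_smul]
            simp [hd, smul_eq_mul]
            ring
          have hlt := hf _ hmem
          rw [hval] at hlt
          -- t * d ≤ c / 2 < c
          have h1 : t * d ≤ t * D := by
            apply mul_le_mul_of_nonneg_left (le_max_left _ _) ht0.le
          have h2 : t * D ≤ (c / (2 * D)) * D := by
            apply mul_le_mul_of_nonneg_right (min_le_right _ _) hDpos.le
          have h3 : (c / (2 * D)) * D = c / 2 := by field_simp
          have : f a - t * d > f p := by
            have : t * d ≤ c / 2 := by linarith [h1, h2, h3 ▸ h2]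
            simp only [hc] at *
            linarith
          linarith
        set F : Set E := A ∩ {y | f y = f p} with hF
        have hFclosed : IsClosed F := hA.inter (isClosed_eq f.continuous continuous_const)
        have hFconv : Convex ℝ F := hconv.inter (convex_hyperplane
          ⟨fun a b => map_add f a b, fun c a => map_smul f c a⟩ (f p))
        have hpF : p ∈ F := ⟨hp, rfl⟩
        have hFrec : recCone F ⊆ recCone A := by
          intro v hv
          exact mem_recCone_of_ray hA hconv (x₀ := p) (fun t ht => (hv p hpF t ht).1)
        have hFpt : ∀ v ∈ recCone F, -v ∈ recCone F → v = 0 :=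
          fun v hv hnv => hpt v (hFrec hv) (hFrec hnv)
        set W := LinearMap.ker (f : E →ₗ[ℝ] ℝ) with hWdef
        have hWne : W ≠ ⊤ := by
          intro h
          obtain ⟨w, hw⟩ := hint
          have hw0 : f w = 0 := by
            have : (w : E) ∈ W := h ▸ Submodule.mem_top
            simpa [hWdef, LinearMap.mem_ker] using this
          have hp0 : f p = 0 := by
            have : (p : E) ∈ W := h ▸ Submodule.mem_top
            simpa [hWdef, LinearMap.mem_ker] using this
          have := hf w hw
          rw [hw0, hp0] at this
          exact lt_irrefl 0 this
        have hWrank : Module.finrank ℝ W ≤ n := by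
          have := Submodule.finrank_lt (K := ℝ) (V := E) hWne
          omega
        have hsub : ∀ a ∈ F, a - p ∈ W := by
          intro a ha
          have : f (a - p) = 0 := by rw [map_sub, ha.2, sub_self]
          simpa [hWdef, LinearMap.mem_ker] using this
        have hmem := transport hFclosed hFconv W hpF hsub
          (fun B h1 h2 h3 => IH W hWrank B h1 h2 h3) hFpt hpF
        -- extreme points of F are extreme points of A
        have hext : {x | IsExtremePt F x} ⊆ {x | IsExtremePt A x} := by
          intro e he
          refine ⟨he.1.1, ?_⟩
          intro y hy z hz l hl0 hl1 heq
          have hfe : f e = f p := he.1.2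
          have hfy : f y ≤ f p := hle y hy
          have hfz : f z ≤ f p := hle z hz
          have hcomb : f e = l * f y + (1 - l) * f z := by
            rw [heq, map_add, map_smul, map_smul]; simp [smul_eq_mul]
          have hfy' : f y = f p := by nlinarith
          have hfz' : f z = f p := by nlinarith
          exact he.2 y ⟨hy, hfy'⟩ z ⟨hz, hfz'⟩ l hl0 hl1 heq
        exact Set.add_subset_add (convexHull_mono hext) hFrec hmem
      by_cases hxint : x ∈ interior A
      case neg => exact FR x hx hxint
      case pos =>
        rcases subsingleton_or_nontrivial E with hsing | hnt
        · exact subsingleton_case hx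
        obtain ⟨v, hvne⟩ := exists_ne (0 : E)
        set L : Set ℝ := {t : ℝ | x + t • v ∈ A} with hLdef
        have hL0 : (0:ℝ) ∈ L := by simp [hLdef, hx]
        have hLclosed : IsClosed L := by
          have hcont : Continuous (fun t : ℝ => x + t • v) :=
            continuous_const.add (continuous_id.smul continuous_const)
          exact hA.preimage hcont
        have hLconv : Convex ℝ L := by
          intro s hs t ht a b ha hb hab
          show x + (a • s + b • t) • v ∈ A
          have : x + (a • s + b • t) • v = a • (x + s • v) + b • (x + t • v) := by
            have h1 : a • x + b • x = x := by rw [← add_smul, hab, one_smul]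
            simp only [smul_eq_mul, smul_add, smul_smul]
            rw [show a • x + (a * s) • v + (b • x + (b * t) • v)
                  = (a • x + b • x) + ((a * s) • v + (b * t) • v) by abel, h1, add_smul]
          rw [this]
          exact hconv hs ht ha hb hab
        have hmemL : ∀ s ∈ L, ∀ t, 0 ≤ t → t ≤ s → t ∈ L := by
          intro s hs t ht hts
          rcases eq_or_lt_of_le ht with rfl | htpos
          · exact hL0
          have hspos : 0 < s := lt_of_lt_of_le htpos hts
          have h1 : 0 ≤ t / s := div_nonneg ht hspos.le
          have h2 : 0 ≤ 1 - t / s := by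
            have := (div_le_one hspos).2 hts; linarith
          have := hLconv hL0 hs h2 h1 (by ring)
          simpa [smul_eq_mul, div_mul_cancel₀ _ hspos.ne'] using this
        have hmemL' : ∀ s ∈ L, ∀ t, t ≤ 0 → s ≤ t → t ∈ L := by
          intro s hs t ht hts
          rcases eq_or_lt_of_le ht with rfl | htneg
          · exact hL0
          have hsneg : s < 0 := lt_of_le_of_lt hts htneg
          have h1 : 0 ≤ t / s := by
            rw [← neg_div_neg_eq]; exact div_nonneg (by linarith) (by linarith)
          have h2 : 0 ≤ 1 - t / s := by
            have : t / s ≤ 1 := by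
              rw [← neg_div_neg_eq]
              exact (div_le_one (by linarith)).2 (by linarith)
            linarith
          have := hLconv hL0 hs h2 h1 (by ring)
          simpa [smul_eq_mul, div_mul_cancel₀ _ hsneg.ne] using this
        have hup : ¬ BddAbove L → v ∈ recCone A := by
          intro hnb
          apply mem_recCone_of_ray hA hconv (x₀ := x)
          intro t ht
          obtain ⟨s, hsL, hts⟩ : ∃ s ∈ L, t ≤ s := by
            by_contra hcon
            push_neg at hcon
            exact hnb ⟨t, fun s hs => (hcon s hs).le⟩
          exact hmemL s hsL t ht hts
        have hdown : ¬ BddBelow L → -v ∈ recCone A := by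
          intro hnb
          apply mem_recCone_of_ray hA hconv (x₀ := x)
          intro t ht
          obtain ⟨s, hsL, hts⟩ : ∃ s ∈ L, s ≤ -t := by
            by_contra hcon
            push_neg at hcon
            exact hnb ⟨-t, fun s hs => (hcon s hs).le⟩
          have h := hmemL' s hsL (-t) (by linarith) hts
          show x + t • (-v) ∈ A
          rw [smul_neg, ← neg_smul]
          exact h
        have hRconv : Convex ℝ (convexHull ℝ {x | IsExtremePt A x} + recCone A) :=
          (convex_convexHull ℝ _).add (recCone_convex A)
        have hfrontpt : ∀ b : ℝ, b ∈ L → (∀ t ∈ L, t ≤ b) ∨ (∀ t ∈ L, b ≤ t) →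
            x + b • v ∉ interior A := by
          intro b hbL hmax hint'
          obtain ⟨ε, hε, hball⟩ := Metric.mem_nhds_iff.1 (mem_interior_iff_mem_nhds.1 hint')
          set δ : ℝ := ε / (2 * (‖v‖ + 1)) with hδ
          have hnv : (0:ℝ) < ‖v‖ + 1 := by positivity
          have hδpos : 0 < δ := by positivity
          have hdist : ∀ (c : ℝ), |c| ≤ δ → x + (b + c) • v ∈ A := by
            intro c hc
            apply hball
            simp only [Metric.mem_ball, dist_eq_norm]
            have : x + (b + c) • v - (x + b • v) = c • v := by
              rw [add_smul]; abel
            rw [this, norm_smul]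
            calc ‖c‖ * ‖v‖ ≤ δ * (‖v‖ + 1) := by
                  apply mul_le_mul (by rwa [Real.norm_eq_abs]) (by linarith)
                    (norm_nonneg v) hδpos.le
              _ = ε / 2 := by rw [hδ]; field_simp
              _ < ε := by linarith
          rcases hmax with hmax | hmin
          · have : b + δ ∈ L := hdist δ (by rw [abs_of_pos hδpos])
            have := hmax _ this
            linarith
          · have : b - δ ∈ L := by
              have := hdist (-δ) (by rw [abs_neg, abs_of_pos hδpos])
              rw [sub_eq_add_neg]; exact this
            have := hmin _ this
            linarith
        by_cases hba : BddAbove L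
        · have hbL : sSup L ∈ L := hLclosed.csSup_mem ⟨0, hL0⟩ hba
          set b := sSup L with hbdef
          have hb0 : 0 ≤ b := le_csSup hba hL0
          have hrfront : x + b • v ∉ interior A :=
            hfrontpt b hbL (Or.inl (fun t htL => le_csSup hba htL))
          have hrR := FR _ hbL hrfront
          by_cases hbb : BddBelow L
          · have haL : sInf L ∈ L := hLclosed.csInf_mem ⟨0, hL0⟩ hbb
            set a := sInf L with hadef
            have ha0 : a ≤ 0 := csInf_le hbb hL0
            have hpfront : x + a • v ∉ interior A :=
              hfrontpt a haL (Or.inr (fun t htL => csInf_le hbb htL))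
            have hpR := FR _ haL hpfront
            rcases eq_or_lt_of_le (le_trans ha0 hb0) with heq | hab
            · -- a = b = 0
              have ha0' : a = 0 := le_antisymm ha0 (heq ▸ hb0)
              have : x + a • v = x := by rw [ha0', zero_smul, add_zero]
              rw [← this]
              exact hpR
            · set μ : ℝ := b / (b - a) with hμ
              have hba' : 0 < b - a := sub_pos.2 hab
              have hμ0 : 0 ≤ μ := div_nonneg hb0 hba'.le
              have hμ1 : μ ≤ 1 := by
                rw [div_le_one hba']
                linarith
              have hcombo : μ • (x + a • v) + (1 - μ) • (x + b • v) = x := by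
                have h1 : μ • x + (1 - μ) • x = x := by
                  rw [← add_smul]; ring_nf; rw [one_smul]
                have h2 : μ * a + (1 - μ) * b = 0 := by
                  rw [hμ, div_mul_eq_mul_div, one_sub_div hba'.ne', div_mul_eq_mul_div,
                    ← add_div, div_eq_zero_iff]
                  left; ring
                simp only [smul_add, smul_smul]
                rw [show μ • x + (μ * a) • v + ((1-μ) • x + ((1-μ) * b) • v)
                      = (μ • x + (1-μ) • x) + ((μ * a) • v + ((1-μ) * b) • v) by abel,
                  h1, ← add_smul, h2, zero_smul, add_zero]
              rw [← hcombo]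
              exact hRconv hpR hrR hμ0 (by linarith) (by ring)
          · -- not bounded below : -v is a recession direction
            have hmv := hdown hbb
            obtain ⟨cc, hcc, r, hr, hcr⟩ := Set.mem_add.1 hrR
            have : x = cc + (r + b • (-v)) := by
              rw [← add_assoc, hcr, smul_neg]
              abel
            rw [this]
            exact add_mem_add hcc (recCone_add hr (recCone_smul hmv hb0))
        · have hv' := hup hba
          by_cases hbb : BddBelow L
          · have haL : sInf L ∈ L := hLclosed.csInf_mem ⟨0, hL0⟩ hbb
            set a := sInf L with hadef
            have ha0 : a ≤ 0 := csInf_le hbb hL0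
            have hpfront : x + a • v ∉ interior A :=
              hfrontpt a haL (Or.inr (fun t htL => csInf_le hbb htL))
            have hpR := FR _ haL hpfront
            obtain ⟨cc, hcc, r, hr, hcr⟩ := Set.mem_add.1 hpR
            have : x = cc + (r + (-a) • v) := by
              rw [← add_assoc, hcr]
              simp only [neg_smul]
              abel
            rw [this]
            exact add_mem_add hcc (recCone_add hr (recCone_smul hv' (by linarith)))
          · exact absurd (hpt v hv' (hdown hbb)) hvne


end Stmt17Aux

namespace Stmt17Aux

section generic
variable {X : Type*} [AddCommGroup X] [Module ℝ X] {q : X → ℝ}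

theorem q_zero (hqh : ∀ (t : ℝ) (x : X), 0 ≤ t → q (t • x) = t * q x) : q 0 = 0 := by
  have := hqh 0 0 le_rfl
  simpa using this

theorem ball_isOpen (hqh : ∀ (t : ℝ) (x : X), 0 ≤ t → q (t • x) = t * q x)
    {c : X} {ε : ℝ} (hε : 0 < ε) : @IsOpen X (tauQ q) (asymBall q c ε) := by
  show TopologicalSpace.GenerateOpen _ _
  exact TopologicalSpace.GenerateOpen.basic _ ⟨c, ε, hε, rfl⟩

theorem cluster_point (hqh : ∀ (t : ℝ) (x : X), 0 ≤ t → q (t • x) = t * q x)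
    {K : Set X} (hK : @IsCompact X (tauQ q) K) (u : ℕ → X) (hu : ∀ j, u j ∈ K) :
    ∃ a ∈ K, ∀ ε > 0, ∀ N : ℕ, ∃ j ≥ N, q (u j - a) < ε := by
  set F := Filter.map u Filter.atTop with hF
  have hle : F ≤ Filter.principal K := by
    rw [Filter.le_principal_iff]
    exact Filter.mem_map.2 (Filter.Eventually.of_forall hu)
  obtain ⟨a, haK, hcl⟩ := hK hle
  refine ⟨a, haK, fun ε hε N => ?_⟩
  letI : TopologicalSpace X := tauQ q
  have hU : asymBall q a ε ∈ @nhds X (tauQ q) a := by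
    apply IsOpen.mem_nhds (ball_isOpen hqh hε)
    show q (a - a) < ε
    rw [sub_self, q_zero hqh]
    exact hε
  have hcl' : (@nhds X (tauQ q) a ⊓ F).NeBot := hcl
  have h1 : asymBall q a ε ∈ @nhds X (tauQ q) a ⊓ F := Filter.mem_inf_of_left hU
  have h2 : u '' Set.Ici N ∈ @nhds X (tauQ q) a ⊓ F :=
    Filter.mem_inf_of_right (Filter.image_mem_map (Filter.mem_atTop N))
  obtain ⟨y, hy1, hy2⟩ := hcl'.nonempty_of_mem (Filter.inter_mem h1 h2)
  obtain ⟨j, hjN, rfl⟩ := hy2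
  exact ⟨j, hjN, hy1⟩

theorem q_bounded (hq0 : ∀ x, 0 ≤ q x)
    (hqh : ∀ (t : ℝ) (x : X), 0 ≤ t → q (t • x) = t * q x)
    (hqtri : ∀ x y, q (x + y) ≤ q x + q y)
    {K : Set X} (hK : @IsCompact X (tauQ q) K) :
    ∃ M₀ : ℝ, ∀ k ∈ K, q k ≤ M₀ := by
  have hUo : ∀ c : X, @IsOpen X (tauQ q) (asymBall q c 1) := fun c => ball_isOpen hqh one_pos
  have hcov : K ⊆ ⋃ c : X, asymBall q c 1 := by
    intro k _
    exact Set.mem_iUnion.2 ⟨k, by show q (k - k) < 1; rw [sub_self, q_zero hqh]; exact one_pos⟩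
  letI : TopologicalSpace X := tauQ q
  obtain ⟨t, ht⟩ := hK.elim_finite_subcover _ hUo hcov
  refine ⟨∑ c ∈ t, (q c + 1), fun k hk => ?_⟩
  obtain ⟨c, hct, hkc⟩ := Set.mem_iUnion₂.1 (ht hk)
  have h1 : q k ≤ q (k - c) + q c := by
    have := hqtri (k - c) c
    simpa using this
  have h2 : q (k - c) < 1 := hkc
  have h3 : q c + 1 ≤ ∑ c ∈ t, (q c + 1) :=
    Finset.single_le_sum (f := fun c => q c + 1) (fun c _ => add_nonneg (hq0 c) zero_le_one) hct
  linarith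

theorem theta0_add (hqtri : ∀ x y, q (x + y) ≤ q x + q y) (hq0 : ∀ x, 0 ≤ q x)
    {u v : X} (hu : u ∈ theta0 q) (hv : v ∈ theta0 q) : u + v ∈ theta0 q := by
  have h1 := hqtri u v
  have h2 := hq0 (u + v)
  simp only [theta0, Set.mem_setOf_eq] at *
  linarith

theorem theta0_smul (hqh : ∀ (t : ℝ) (x : X), 0 ≤ t → q (t • x) = t * q x)
    {u : X} (hu : u ∈ theta0 q) {c : ℝ} (hc : 0 ≤ c) : c • u ∈ theta0 q := by
  simp only [theta0, Set.mem_setOf_eq] at *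
  rw [hqh c u hc, hu, mul_zero]

end generic


section normed

variable {E : Type*} [NormedAddCommGroup E] [NormedSpace ℝ E] [FiniteDimensional ℝ E]
  {q : E → ℝ}

theorem main_normed
    (hq0 : ∀ x, 0 ≤ q x)
    (hqh : ∀ (t : ℝ) (x : E), 0 ≤ t → q (t • x) = t * q x)
    (hqtri : ∀ x y, q (x + y) ≤ q x + q y)
    (hqsep : ∀ x, (q x = 0 ∧ q (-x) = 0) ↔ x = 0)
    {M : ℝ} (hM0 : 0 ≤ M) (hM : ∀ x, q x ≤ M * ‖x‖)
    {K : Set E} (hne : K.Nonempty) (hK : @IsCompact E (tauQ q) K) (hconv : Convex ℝ K) :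
    K ⊆ convexHull ℝ {x | IsExtremePt (K + theta0 q) x} + theta0 q := by
  set C := theta0 q with hC
  set A := K + C with hA
  have hCconv : Convex ℝ C := fun u hu v hv a b ha hb hab =>
    theta0_add hqtri hq0 (theta0_smul hqh hu ha) (theta0_smul hqh hv hb)
  have hAconv : Convex ℝ A := hconv.add hCconv
  have hCzero : (0:E) ∈ C := q_zero hqh
  have hKA : K ⊆ A := fun k hk => by simpa using Set.add_mem_add hk hCzero
  -- A is closed
  have hAclosed : IsClosed A := by
    apply IsSeqClosed.isClosed
    intro xs x hxs hlim
    choose k hk c hc heq using fun j => Set.mem_add.1 (hxs j)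
    obtain ⟨a, haK, hclu⟩ := cluster_point hqh hK k hk
    have hqxa : q (x - a) = 0 := by
      refine le_antisymm ?_ (hq0 _)
      by_contra hpos
      push_neg at hpos
      set ε : ℝ := q (x - a) / (2 * (M + 1)) with hε
      have hM1 : (0:ℝ) < M + 1 := by linarith
      have hεpos : 0 < ε := by positivity
      obtain ⟨N, hN⟩ := (Metric.tendsto_atTop.1 hlim) ε hεpos
      obtain ⟨j, hjN, hqj⟩ := hclu ε hεpos N
      have hxj : ‖x - xs j‖ < ε := by
        have := hN j hjN
        rw [dist_eq_norm] at this
        rw [← norm_neg]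
        simpa [neg_sub] using this
      have hsplit : x - a = (x - xs j) + c j + (k j - a) := by
        rw [← heq j]; abel
      have h1 : q (x - a) ≤ q (x - xs j) + q (c j) + q (k j - a) := by
        rw [hsplit]
        calc q ((x - xs j) + c j + (k j - a)) ≤ q ((x - xs j) + c j) + q (k j - a) :=
              hqtri _ _
          _ ≤ q (x - xs j) + q (c j) + q (k j - a) := by linarith [hqtri (x - xs j) (c j)]
      have h2 : q (x - xs j) ≤ M * ε := by
        have := hM (x - xs j)
        have hMε : M * ‖x - xs j‖ ≤ M * ε := mul_le_mul_of_nonneg_left hxj.le hM0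
        linarith
      have h3 : q (c j) = 0 := hc j
      have : q (x - a) < M * ε + 0 + ε := by linarith
      have heq2 : ε = q (x - a) / (2 * (M + 1)) := hε
      have h5 : (M + 1) * ε = q (x - a) / 2 := by
        rw [heq2]
        field_simp
      nlinarith [this, h5]
    have : x = a + (x - a) := by abel
    rw [this]
    exact Set.add_mem_add haK hqxa
  -- recession cone of A equals C
  obtain ⟨M₀, hM₀⟩ := q_bounded hq0 hqh hqtri hK
  obtain ⟨k₀, hk₀⟩ := hne
  have hk₀A : k₀ ∈ A := hKA hk₀
  have hrecsub : recCone A ⊆ C := by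
    intro v hv
    show q v = 0
    refine le_antisymm ?_ (hq0 v)
    by_contra hpos
    push_neg at hpos
    set t : ℝ := (M₀ + q (-k₀) + 1) / q v with ht
    have hnum : 0 < M₀ + q (-k₀) + 1 := by
      have h1 := hM₀ k₀ hk₀
      have h2 := hq0 k₀
      have h3 := hq0 (-k₀)
      linarith
    have htpos : 0 < t := div_pos hnum hpos
    obtain ⟨k, hkK, c', hc', hkc⟩ := Set.mem_add.1 (hv k₀ hk₀A t htpos.le)
    -- t • v = (k - k₀) + c'
    have hsplit : t • v = (k - k₀) + c' := by
      rw [show k - k₀ + c' = (k + c') - k₀ by abel, hkc]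
      abel
    have h1 : q (t • v) ≤ q (k - k₀) + q c' := hsplit ▸ hqtri _ _
    have h2 : q (k - k₀) ≤ q k + q (-k₀) := by
      have := hqtri k (-k₀)
      simpa [sub_eq_add_neg] using this
    have h3 : q (t • v) = M₀ + q (-k₀) + 1 := by
      rw [hqh t v htpos.le, ht, div_mul_cancel₀ _ hpos.ne']
    have h4 := hM₀ k hkK
    rw [h3, hc'] at h1
    linarith
  have hrecsup : C ⊆ recCone A := by
    intro c hc x hxA t ht
    obtain ⟨k, hkK, c', hc', rfl⟩ := Set.mem_add.1 hxA
    have : (k + c') + t • c = k + (c' + t • c) := by abel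
    rw [this]
    exact Set.add_mem_add hkK (theta0_add hqtri hq0 hc' (theta0_smul hqh hc ht))
  have hpt : ∀ v ∈ recCone A, -v ∈ recCone A → v = 0 := by
    intro v hv hnv
    exact (hqsep v).1 ⟨hrecsub hv, hrecsub hnv⟩
  have hklee := klee (Module.finrank ℝ E) E le_rfl A hAclosed hAconv hpt
  intro x hx
  have := hklee (hKA hx)
  obtain ⟨s, hs, r, hr, hsr⟩ := Set.mem_add.1 this
  rw [← hsr]
  exact Set.add_mem_add hs (hrecsub hr)

end normed


section pibound

variable {d : ℕ} {Q : (Fin d → ℝ) → ℝ}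

theorem q_sum_le {X : Type*} [AddCommGroup X] [Module ℝ X] {q : X → ℝ}
    (hqh : ∀ (t : ℝ) (x : X), 0 ≤ t → q (t • x) = t * q x)
    (hqtri : ∀ x y, q (x + y) ≤ q x + q y)
    (s : Finset (Fin d)) (g : Fin d → X) : q (∑ i ∈ s, g i) ≤ ∑ i ∈ s, q (g i) := by
  classical
  induction s using Finset.induction with
  | empty => simp [q_zero hqh]
  | insert a s hni ih =>
    rw [Finset.sum_insert hni, Finset.sum_insert hni]
    calc q (g a + ∑ i ∈ s, g i) ≤ q (g a) + q (∑ i ∈ s, g i) := hqtri _ _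
      _ ≤ q (g a) + ∑ i ∈ s, q (g i) := by linarith

theorem pi_bound
    (hq0 : ∀ x, 0 ≤ Q x)
    (hqh : ∀ (t : ℝ) (x : Fin d → ℝ), 0 ≤ t → Q (t • x) = t * Q x)
    (hqtri : ∀ x y, Q (x + y) ≤ Q x + Q y) :
    ∃ M : ℝ, 0 ≤ M ∧ ∀ v, Q v ≤ M * ‖v‖ := by
  classical
  set Mi : Fin d → ℝ := fun i => max (Q (Pi.single i 1)) (Q (-Pi.single i 1)) with hMi
  have hMi0 : ∀ i, 0 ≤ Mi i := fun i => le_trans (hq0 _) (le_max_left _ _)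
  refine ⟨∑ i, Mi i, Finset.sum_nonneg (fun i _ => hMi0 i), fun v => ?_⟩
  have hsingle : ∀ (i : Fin d) (c : ℝ), Q (Pi.single i c) ≤ |c| * Mi i := by
    intro i c
    rcases le_or_gt 0 c with hc | hc
    · have : Pi.single i c = c • (Pi.single i (1:ℝ) : Fin d → ℝ) := by
        funext j
        by_cases hj : j = i
        · subst hj; simp
        · simp [Pi.single_apply, hj]
      rw [this, hqh c _ hc, abs_of_nonneg hc]
      exact mul_le_mul_of_nonneg_left (le_max_left _ _) hc
    · have : Pi.single i c = (-c) • (-(Pi.single i (1:ℝ) : Fin d → ℝ)) := by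
        funext j
        by_cases hj : j = i
        · subst hj; simp
        · simp [Pi.single_apply, hj]
      rw [this, hqh (-c) _ (by linarith), abs_of_neg hc]
      exact mul_le_mul_of_nonneg_left (le_max_right _ _) (by linarith)
  have hv : v = ∑ i, Pi.single i (v i) := (Finset.univ_sum_single v).symm
  calc Q v = Q (∑ i, Pi.single i (v i)) := by rw [← hv]
    _ ≤ ∑ i, Q (Pi.single i (v i)) := q_sum_le hqh hqtri _ _
    _ ≤ ∑ i, Mi i * ‖v‖ := by
        apply Finset.sum_le_sum
        intro i _
        calc Q (Pi.single i (v i)) ≤ |v i| * Mi i := hsingle i (v i)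
          _ ≤ ‖v‖ * Mi i := by
              apply mul_le_mul_of_nonneg_right _ (hMi0 i)
              rw [← Real.norm_eq_abs]
              exact norm_le_pi_norm v i
          _ = Mi i * ‖v‖ := mul_comm _ _
    _ = (∑ i, Mi i) * ‖v‖ := by rw [← Finset.sum_mul]

end pibound

section transportXV

variable {X : Type*} [AddCommGroup X] [Module ℝ X]
  {Y : Type*} [AddCommGroup Y] [Module ℝ Y]

theorem tauQ_compact_image (q : X → ℝ) (e : X ≃ₗ[ℝ] Y)
    {K : Set X} (hK : @IsCompact X (tauQ q) K) :
    @IsCompact Y (tauQ (fun y => q (e.symm y))) (⇑e '' K) := by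
  letI tX : TopologicalSpace X := tauQ q
  letI tY : TopologicalSpace Y := tauQ (fun y => q (e.symm y))
  have hcont : Continuous (⇑e : X → Y) := by
    rw [show tY = tauQ (fun y => q (e.symm y)) from rfl]
    apply continuous_generateFrom_iff.2
    rintro S ⟨c, ε, hε, rfl⟩
    have : ⇑e ⁻¹' (asymBall (fun y => q (e.symm y)) c ε) = asymBall q (e.symm c) ε := by
      ext y
      show q (e.symm (e y - c)) < ε ↔ q (y - e.symm c) < ε
      rw [map_sub, e.symm_apply_apply]
    rw [this]
    exact TopologicalSpace.GenerateOpen.basic _ ⟨e.symm c, ε, hε, rfl⟩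
  exact hK.image hcont

theorem equiv_image_add (e : X ≃ₗ[ℝ] Y) (S T : Set X) : ⇑e '' (S + T) = ⇑e '' S + ⇑e '' T := by
  ext y
  constructor
  · rintro ⟨x, hx, rfl⟩
    obtain ⟨s, hs, t, ht, rfl⟩ := Set.mem_add.1 hx
    exact Set.mem_add.2 ⟨e s, Set.mem_image_of_mem _ hs, e t, Set.mem_image_of_mem _ ht,
      (map_add e s t).symm⟩
  · rintro hy
    obtain ⟨-, ⟨s, hs, rfl⟩, -, ⟨t, ht, rfl⟩, rfl⟩ := Set.mem_add.1 hy
    exact ⟨s + t, Set.add_mem_add hs ht, map_add e s t⟩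

theorem theta0_image (q : X → ℝ) (e : X ≃ₗ[ℝ] Y) :
    theta0 (fun y => q (e.symm y)) = ⇑e '' theta0 q := by
  ext y
  constructor
  · intro hy
    exact ⟨e.symm y, hy, e.apply_symm_apply y⟩
  · rintro ⟨x, hx, rfl⟩
    show q (e.symm (e x)) = 0
    rwa [e.symm_apply_apply]

theorem extremePt_image (e : X ≃ₗ[ℝ] Y) (A : Set X) :
    {y | IsExtremePt (⇑e '' A) y} = ⇑e '' {x | IsExtremePt A x} := by
  ext y
  constructor
  · rintro ⟨⟨x, hx, rfl⟩, hext⟩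
    refine ⟨x, ⟨hx, ?_⟩, rfl⟩
    intro u hu w hw l hl0 hl1 hcomb
    have : e x = l • e u + (1 - l) • e w := by
      rw [← map_smul, ← map_smul, ← map_add, hcomb]
    obtain ⟨h1, h2⟩ := hext (e u) (Set.mem_image_of_mem _ hu) (e w)
      (Set.mem_image_of_mem _ hw) l hl0 hl1 this
    exact ⟨e.injective h1, e.injective h2⟩
  · rintro ⟨x, ⟨hx, hext⟩, rfl⟩
    refine ⟨Set.mem_image_of_mem _ hx, ?_⟩
    rintro - ⟨u, hu, rfl⟩ - ⟨w, hw, rfl⟩ l hl0 hl1 hcomb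
    have : x = l • u + (1 - l) • w := by
      apply e.injective
      rw [map_add, map_smul, map_smul, hcomb]
    obtain ⟨h1, h2⟩ := hext u hu w hw l hl0 hl1 this
    exact ⟨congrArg e h1, congrArg e h2⟩

end transportXV

end Stmt17Aux


open Stmt17Aux in
theorem stmt17 {X : Type*} [AddCommGroup X] [Module ℝ X] [FiniteDimensional ℝ X] (q : X → ℝ)
    (hq0 : ∀ x, 0 ≤ q x)
    (hqh : ∀ (t : ℝ) (x : X), 0 ≤ t → q (t • x) = t * q x)
    (hqtri : ∀ x y, q (x + y) ≤ q x + q y)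
    (hqsep : ∀ x, (q x = 0 ∧ q (-x) = 0) ↔ x = 0)
    (K : Set X) (hne : K.Nonempty) (hK : @IsCompact X (tauQ q) K) (hconv : Convex ℝ K) :
    convexHull ℝ {x | IsExtremePt (K + theta0 q) x} ⊆ K ∧
    K ⊆ convexHull ℝ {x | IsExtremePt (K + theta0 q) x} + theta0 q ∧
    convexHull ℝ {x | IsExtremePt (K + theta0 q) x} + theta0 q = K + theta0 q := by
  classical
  set θ := theta0 q with hθdef
  set S := convexHull ℝ {x | IsExtremePt (K + θ) x} with hSdef
  -- Part 1 : S ⊆ K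
  have hextK : {x | IsExtremePt (K + θ) x} ⊆ K := by
    rintro x ⟨hxA, hxe⟩
    obtain ⟨k, hk, t, ht, rfl⟩ := Set.mem_add.1 hxA
    have h2t : t + t ∈ θ := theta0_add hqtri hq0 ht ht
    have hkA : k ∈ K + θ := by
      have : k + 0 ∈ K + θ := Set.add_mem_add hk (q_zero hqh)
      simpa using this
    have hzA : k + (t + t) ∈ K + θ := Set.add_mem_add hk h2t
    have hcomb : k + t = (1/2 : ℝ) • k + (1 - 1/2 : ℝ) • (k + (t + t)) := by
      norm_num
      module
    obtain ⟨h1, -⟩ := hxe k hkA (k + (t + t)) hzA (1/2) (by norm_num) (by norm_num) hcomb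
    rw [h1]
    exact hk
  have part1 : S ⊆ K := convexHull_min hextK hconv
  -- Part 2 : K ⊆ S + θ, via transport to Fin d → ℝ
  have part2 : K ⊆ S + θ := by
    set d := Module.finrank ℝ X with hd
    set e : X ≃ₗ[ℝ] (Fin d → ℝ) := (Module.finBasis ℝ X).equivFun with he
    set Q : (Fin d → ℝ) → ℝ := fun y => q (e.symm y) with hQ
    have hQ0 : ∀ v, 0 ≤ Q v := fun v => hq0 _
    have hQh : ∀ (t : ℝ) (v : Fin d → ℝ), 0 ≤ t → Q (t • v) = t * Q v := by
      intro t v ht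
      show q (e.symm (t • v)) = t * q (e.symm v)
      rw [map_smul]
      exact hqh t _ ht
    have hQtri : ∀ u v, Q (u + v) ≤ Q u + Q v := by
      intro u v
      show q (e.symm (u + v)) ≤ _
      rw [map_add]
      exact hqtri _ _
    have hQsep : ∀ v, (Q v = 0 ∧ Q (-v) = 0) ↔ v = 0 := by
      intro v
      show (q (e.symm v) = 0 ∧ q (e.symm (-v)) = 0) ↔ v = 0
      rw [map_neg]
      rw [hqsep (e.symm v)]
      constructor
      · intro h
        have := congrArg e h
        rwa [e.apply_symm_apply, map_zero] at this
      · intro h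
        rw [h, map_zero]
    obtain ⟨M, hM0, hM⟩ := pi_bound hQ0 hQh hQtri
    have hKV : (⇑e '' K).Nonempty := hne.image _
    have hKVconv : Convex ℝ (⇑e '' K) := hconv.linear_image e.toLinearMap
    have hKVcomp : @IsCompact (Fin d → ℝ) (tauQ Q) (⇑e '' K) := tauQ_compact_image q e hK
    have hmain := main_normed hQ0 hQh hQtri hQsep hM0 hM hKV hKVcomp hKVconv
    intro x hx
    have hximg := hmain (Set.mem_image_of_mem _ hx)
    have htheta : theta0 Q = ⇑e '' θ := theta0_image q e
    have hAimg : ⇑e '' K + theta0 Q = ⇑e '' (K + θ) := by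
      rw [htheta, ← equiv_image_add]
    have hextimg : {v | IsExtremePt (⇑e '' K + theta0 Q) v}
        = ⇑e '' {x | IsExtremePt (K + θ) x} := by
      rw [hAimg]
      exact extremePt_image e (K + θ)
    have hhull : convexHull ℝ {v | IsExtremePt (⇑e '' K + theta0 Q) v} = ⇑e '' S := by
      rw [hextimg, hSdef]
      have := LinearMap.image_convexHull e.toLinearMap {x | IsExtremePt (K + θ) x}
      simpa using this.symm
    rw [hhull, htheta, ← equiv_image_add] at hximg
    obtain ⟨y, hy, hyx⟩ := hximg
    rwa [← e.injective hyx]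
  -- Part 3
  refine ⟨part1, part2, le_antisymm ?_ ?_⟩
  · intro y hy
    obtain ⟨s, hs, t, ht, rfl⟩ := Set.mem_add.1 hy
    exact Set.add_mem_add (part1 hs) ht
  · intro y hy
    obtain ⟨k, hk, t, ht, rfl⟩ := Set.mem_add.1 hy
    obtain ⟨s, hs, t', ht', hst⟩ := Set.mem_add.1 (part2 hk)
    have : k + t = s + (t' + t) := by rw [← hst]; abel
    rw [this]
    exact Set.add_mem_add hs (theta0_add hqtri hq0 ht' ht)
end

section
/- Let X be finite dimensional over ℝ and let K ⊆ X be a nonempty q-compact convex set. Let E(K) denote the set of extreme points of K + θ(0) and S(K) the convex hull of E(K). If K' ⊆ X is any subset satisfying S(K) ⊆ K' ⊆ S(K) + θ(0), then K' is q-compact. -/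
open Set Pointwise

set_option maxHeartbeats 1000000

/-! ### Auxiliary lemmas -/

theorem stmt18_q_zero {X : Type*} [AddCommGroup X] [Module ℝ X] (q : X → ℝ)
    (hqh : ∀ (t : ℝ) (x : X), 0 ≤ t → q (t • x) = t * q x) : q 0 = 0 := by
  have := hqh 0 0 le_rfl
  simpa using this

/-- Every `τ_q`-open set absorbs translations by elements of `θ(0)`. -/
theorem stmt18_absorb {X : Type*} [AddCommGroup X] (q : X → ℝ)
    (hqtri : ∀ x y, q (x + y) ≤ q x + q y)
    {U : Set X} (hU : @IsOpen X (tauQ q) U) :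
    ∀ x ∈ U, ∀ t, q t = 0 → x + t ∈ U := by
  have hU' : TopologicalSpace.GenerateOpen {S | ∃ x ε, 0 < ε ∧ S = asymBall q x ε} U := hU
  clear hU
  induction hU' with
  | basic S hS =>
    obtain ⟨x₀, ε, hε, rfl⟩ := hS
    intro x hx t ht
    have h := hqtri (x - x₀) t
    rw [show x - x₀ + t = x + t - x₀ by abel] at h
    simp only [asymBall, Set.mem_setOf_eq] at hx ⊢
    linarith
  | univ => intro x _ t _; trivial
  | inter S T _ _ ihS ihT => intro x hx t ht; exact ⟨ihS x hx.1 t ht, ihT x hx.2 t ht⟩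
  | sUnion 𝒮 _ ih =>
    rintro x ⟨S, hS, hxS⟩ t ht
    exact ⟨S, hS, ih S hS x hxS t ht⟩

theorem stmt18_ball_open {X : Type*} [AddCommGroup X] (q : X → ℝ) (x : X) {ε : ℝ}
    (hε : 0 < ε) : @IsOpen X (tauQ q) (asymBall q x ε) :=
  TopologicalSpace.GenerateOpen.basic _ ⟨x, ε, hε, rfl⟩

/-- A `τ_q`-compact set is `q`-bounded from any base point. -/
theorem stmt18_bounded {X : Type*} [AddCommGroup X] (q : X → ℝ)
    {K : Set X} (hK : @IsCompact X (tauQ q) K) (x₀ : X) :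
    ∃ N : ℝ, ∀ y ∈ K, q (y - x₀) ≤ N := by
  have hcov : K ⊆ ⋃ n : ℕ, asymBall q x₀ (n + 1) := by
    intro y hy
    obtain ⟨n, hn⟩ := exists_nat_gt (q (y - x₀))
    exact Set.mem_iUnion.2 ⟨n, show q (y - x₀) < n + 1 by linarith⟩
  obtain ⟨F, hF⟩ := @IsCompact.elim_finite_subcover X (tauQ q) _ _ hK
    (fun n : ℕ => asymBall q x₀ (n + 1))
    (fun n => stmt18_ball_open q x₀ (by positivity)) hcov
  refine ⟨(F.sup id : ℕ) + 1, fun y hy => ?_⟩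
  obtain ⟨n, hnF, hn⟩ := Set.mem_iUnion₂.1 (hF hy)
  have hn' : q (y - x₀) < (n : ℝ) + 1 := hn
  have hle : (n : ℝ) ≤ ((F.sup id : ℕ) : ℝ) := by exact_mod_cast Finset.le_sup (f := id) hnF
  linarith

/-- The norm coming from `q^s`. -/
def stmt18_norm {X : Type*} [AddCommGroup X] [Module ℝ X] (q : X → ℝ)
    (hq0 : ∀ x, 0 ≤ q x)
    (hqh : ∀ (t : ℝ) (x : X), 0 ≤ t → q (t • x) = t * q x)
    (hqtri : ∀ x y, q (x + y) ≤ q x + q y)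
    (hqsep : ∀ x, (q x = 0 ∧ q (-x) = 0) ↔ x = 0) : NormedAddCommGroup X :=
  AddGroupNorm.toNormedAddCommGroup
    { toFun := fun x => max (q x) (q (-x))
      map_zero' := by
        have h0 : q (0 : X) = 0 := stmt18_q_zero q hqh
        simp [h0]
      add_le' := fun x y => by
        refine max_le ?_ ?_
        · exact le_trans (hqtri x y) (add_le_add (le_max_left _ _) (le_max_left _ _))
        · rw [neg_add]
          exact le_trans (hqtri (-x) (-y)) (add_le_add (le_max_right _ _) (le_max_right _ _))
      neg' := fun x => by simp [max_comm]
      eq_zero_of_map_eq_zero' := fun x hx => by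
        have h1 : q x = 0 := le_antisymm (le_trans (le_max_left _ _) hx.le) (hq0 x)
        have h2 : q (-x) = 0 := le_antisymm (le_trans (le_max_right _ _) hx.le) (hq0 (-x))
        exact (hqsep x).1 ⟨h1, h2⟩ }

/-- The corresponding normed space structure. -/
def stmt18_normedSpace {X : Type*} [AddCommGroup X] [Module ℝ X] (q : X → ℝ)
    (hq0 : ∀ x, 0 ≤ q x)
    (hqh : ∀ (t : ℝ) (x : X), 0 ≤ t → q (t • x) = t * q x)
    (hqtri : ∀ x y, q (x + y) ≤ q x + q y)
    (hqsep : ∀ x, (q x = 0 ∧ q (-x) = 0) ↔ x = 0) :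
    @NormedSpace ℝ X _ (stmt18_norm q hq0 hqh hqtri hqsep).toSeminormedAddCommGroup := by
  letI := stmt18_norm q hq0 hqh hqtri hqsep
  refine @NormedSpace.mk ℝ X _ _ (inferInstance : Module ℝ X) (fun r x => ?_)
  show max (q (r • x)) (q (-(r • x))) ≤ ‖r‖ * max (q x) (q (-x))
  rcases le_or_gt 0 r with hr | hr
  · have h1 : q (r • x) = r * q x := hqh r x hr
    have h2 : q (-(r • x)) = r * q (-x) := by
      rw [← smul_neg]; exact hqh r (-x) hr
    rw [h1, h2, Real.norm_eq_abs, abs_of_nonneg hr]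
    exact max_le (mul_le_mul_of_nonneg_left (le_max_left _ _) hr)
      (mul_le_mul_of_nonneg_left (le_max_right _ _) hr)
  · have h1 : q (r • x) = (-r) * q (-x) := by
      rw [show r • x = (-r) • (-x) by rw [smul_neg, neg_smul, neg_neg]]
      exact hqh _ _ (by linarith)
    have h2 : q (-(r • x)) = (-r) * q x := by
      rw [show -(r • x) = (-r) • x by rw [neg_smul]]
      exact hqh _ _ (by linarith)
    rw [h1, h2, Real.norm_eq_abs, abs_of_neg hr]
    exact max_le (mul_le_mul_of_nonneg_left (le_max_right _ _) (by linarith))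
      (mul_le_mul_of_nonneg_left (le_max_left _ _) (by linarith))

/-- If `K` is `τ_q`-compact, then `K + θ(0)` is closed in the norm topology. -/
theorem stmt18_closed {X : Type*} [NormedAddCommGroup X]
    (q : X → ℝ) (hq0 : ∀ x, 0 ≤ q x) (hq00 : q 0 = 0)
    (hqtri : ∀ x y, q (x + y) ≤ q x + q y)
    (hqle : ∀ x, q x ≤ ‖x‖)
    {K : Set X} (hKne : K.Nonempty) (hK : @IsCompact X (tauQ q) K) :
    IsClosed (K + theta0 q) := by
  rw [← isOpen_compl_iff, Metric.isOpen_iff]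
  intro z hz
  have hzk : ∀ k ∈ K, 0 < q (z - k) := by
    intro k hk
    rcases (hq0 (z - k)).lt_or_eq with h | h
    · exact h
    · exact absurd (Set.mem_add.2 ⟨k, hk, z - k, h.symm, by abel⟩) hz
  have hcov : K ⊆ ⋃ k : K, asymBall q (k : X) (q (z - k) / 2) := fun k hk =>
    Set.mem_iUnion.2 ⟨⟨k, hk⟩, show q (k - k) < _ by
      rw [sub_self, hq00]; exact half_pos (hzk k hk)⟩
  obtain ⟨F, hF⟩ := @IsCompact.elim_finite_subcover X (tauQ q) _ _ hK
    (fun k : K => asymBall q (k : X) (q (z - k) / 2))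
    (fun k => stmt18_ball_open q _ (half_pos (hzk k k.2))) hcov
  have hFne : F.Nonempty := by
    obtain ⟨k₀, hk₀⟩ := hKne
    obtain ⟨i, hiF, -⟩ := Set.mem_iUnion₂.1 (hF hk₀)
    exact ⟨i, hiF⟩
  refine ⟨F.inf' hFne (fun k => q (z - k) / 2), ?_, ?_⟩
  · exact (Finset.lt_inf'_iff _).2 fun k _ => half_pos (hzk k k.2)
  · intro w hw
    rw [Set.mem_compl_iff]
    intro hwC
    obtain ⟨k, hk, t, ht, rfl⟩ := hwC
    obtain ⟨i, hiF, hki⟩ := Set.mem_iUnion₂.1 (hF hk)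
    have hki' : q (k - i) < q (z - i) / 2 := hki
    have h1 : q (k + t - i) ≤ q (k - i) + q t := by
      have := hqtri (k - i) t
      rwa [show k - i + t = k + t - i by abel] at this
    have h2 : q (z - i) ≤ q (z - (k + t)) + q (k + t - i) := by
      have := hqtri (z - (k + t)) (k + t - i)
      rwa [show z - (k + t) + (k + t - i) = z - i by abel] at this
    have h3 : q (z - (k + t)) ≤ ‖z - (k + t)‖ := hqle _
    have h4 : ‖z - (k + t)‖ < F.inf' hFne (fun k => q (z - k) / 2) := by
      rw [Metric.mem_ball, dist_eq_norm, ← norm_neg] at hw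
      rw [show z - (k + t) = -(k + t - z) by abel]
      exact hw
    have h5 : F.inf' hFne (fun k => q (z - k) / 2) ≤ q (z - i) / 2 :=
      Finset.inf'_le _ hiF
    have ht0 : q t = 0 := ht
    linarith
theorem stmt18_klee {X : Type*} [NormedAddCommGroup X] [NormedSpace ℝ X] [FiniteDimensional ℝ X]
    (q : X → ℝ) (hq0 : ∀ x, 0 ≤ q x)
    (hqh : ∀ (t : ℝ) (x : X), 0 ≤ t → q (t • x) = t * q x)
    (hqtri : ∀ x y, q (x + y) ≤ q x + q y)
    (hqsep : ∀ x, (q x = 0 ∧ q (-x) = 0) ↔ x = 0) (d : ℕ) :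
    ∀ (C : Set X) (x₀ : X) (N : ℝ), IsClosed C → Convex ℝ C →
      (∀ z ∈ C, q (z - x₀) ≤ N) → Module.finrank ℝ (vectorSpan ℝ C) = d →
      ∀ y ∈ C, ∃ s ∈ convexHull ℝ {x | IsExtremePt C x}, q (y - s) = 0 := by
  induction d using Nat.strong_induction_on with
  | _ d ih =>
  intro C x₀ N hCcl hCcv hCbd hdim y hy
  set V : Submodule ℝ X := vectorSpan ℝ C with hV
  have hmemV : ∀ a ∈ C, ∀ b ∈ C, a - b ∈ V := fun a ha b hb => by
    simpa [vsub_eq_sub] using vsub_mem_vectorSpan ℝ ha hb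
  set D : X → Set V := fun p => {v : V | p + (v : X) ∈ C} with hD
  have hDcv : ∀ p, Convex ℝ (D p) := by
    intro p v₁ h₁ v₂ h₂ a b ha hb hab
    show p + ((a • v₁ + b • v₂ : V) : X) ∈ C
    have heq : p + ((a • v₁ + b • v₂ : V) : X)
        = a • (p + (v₁ : X)) + b • (p + (v₂ : X)) := by
      push_cast
      rw [show a • (p + (v₁ : X)) + b • (p + (v₂ : X))
          = (a + b) • p + (a • (v₁:X) + b • (v₂:X)) by module, hab, one_smul]
    rw [heq]
    exact hCcv h₁ h₂ ha hb hab
  have hDcl : ∀ p, IsClosed (D p) :=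
    fun p => hCcl.preimage (continuous_const.add continuous_subtype_val)
  have hD0 : ∀ p ∈ C, (0 : V) ∈ D p := by
    intro p hp; show p + ((0:V) : X) ∈ C; simpa using hp
  have hDspan : ∀ p ∈ C, affineSpan ℝ (D p) = ⊤ := by
    intro p hp
    have hVle : V ≤ Submodule.span ℝ ((↑) '' D p : Set X) := by
      show vectorSpan ℝ C ≤ _
      rw [vectorSpan_def]
      refine Submodule.span_le.2 ?_
      rintro x ⟨a, ha, b, hb, rfl⟩
      show (a - b : X) ∈ _
      have haD : (a - p : X) ∈ ((↑) '' D p : Set X) :=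
        ⟨⟨a - p, hmemV a ha p hp⟩, show p + (a - p) ∈ C by simpa using ha, rfl⟩
      have hbD : (b - p : X) ∈ ((↑) '' D p : Set X) :=
        ⟨⟨b - p, hmemV b hb p hp⟩, show p + (b - p) ∈ C by simpa using hb, rfl⟩
      rw [SetLike.mem_coe, show (a - b : X) = (a - p) - (b - p) by abel]
      exact sub_mem (Submodule.subset_span haD) (Submodule.subset_span hbD)
    have hspan : Submodule.span ℝ (D p) = ⊤ := by
      rw [eq_top_iff]
      rintro v -
      have hv : (v : X) ∈ Submodule.span ℝ (V.subtype '' D p) := by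
        simpa [Submodule.coe_subtype] using hVle v.2
      rw [Submodule.span_image] at hv
      obtain ⟨w, hw, hwv⟩ := hv
      rwa [show w = v from Subtype.ext hwv] at hw
    rw [AffineSubspace.affineSpan_eq_top_iff_vectorSpan_eq_top_of_nonempty ℝ V V ⟨0, hD0 p hp⟩]
    rw [eq_top_iff, ← hspan, vectorSpan_def]
    refine Submodule.span_le.2 fun v hv => Submodule.subset_span ?_
    have : v -ᵥ (0 : V) ∈ D p -ᵥ D p := Set.vsub_mem_vsub hv (hD0 p hp)
    simpa using this
  have hDint : ∀ p ∈ C, (interior (D p)).Nonempty := fun p hp =>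
    ((hDcv p).interior_nonempty_iff_affineSpan_eq_top).2 (hDspan p hp)
  -- the face case
  have face : ∀ p ∈ C, (0 : V) ∉ interior (D p) →
      ∃ s ∈ convexHull ℝ {x | IsExtremePt C x}, q (p - s) = 0 := by
    intro p hp h0
    obtain ⟨f, hf⟩ :=
      geometric_hahn_banach_open_point ((hDcv p).interior) isOpen_interior h0
    obtain ⟨v₀, hv₀⟩ := hDint p hp
    have hfv₀ : f v₀ < 0 := by simpa using hf v₀ hv₀
    have hfD : ∀ v ∈ D p, f v ≤ 0 := by
      intro v hv
      by_contra hpos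
      push_neg at hpos
      have hdpos : 0 < f v - f v₀ := by linarith
      set μ : ℝ := min (1/2) (f v / (2 * (f v - f v₀))) with hμ
      have hμ0 : 0 < μ := lt_min (by norm_num) (by positivity)
      have hμle : μ ≤ f v / (2 * (f v - f v₀)) := min_le_right _ _
      have hμhalf : μ ≤ 1/2 := min_le_left _ _
      have hin := (hDcv p).combo_interior_self_mem_interior hv₀ hv hμ0
        (by linarith : (0:ℝ) ≤ 1 - μ) (by ring)
      have hlt := hf _ hin
      rw [map_add, map_smul, map_smul, map_zero] at hlt
      have key : μ * (f v - f v₀) ≤ f v / 2 := by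
        calc μ * (f v - f v₀) ≤ (f v / (2 * (f v - f v₀))) * (f v - f v₀) := by
              exact mul_le_mul_of_nonneg_right hμle (le_of_lt hdpos)
          _ = f v / 2 := by field_simp
      simp only [smul_eq_mul] at hlt
      nlinarith
    obtain ⟨g, hg, -⟩ := exists_extension_norm_eq V f
    have hgle : ∀ z ∈ C, g z ≤ g p := by
      intro z hz
      have hzD : (⟨z - p, hmemV z hz p hp⟩ : V) ∈ D p := by
        show p + (z - p) ∈ C; simpa using hz
      have h1 : g (z - p) ≤ 0 := by
        have := hfD _ hzD
        rwa [← hg ⟨z - p, hmemV z hz p hp⟩] at this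
      rw [map_sub] at h1
      linarith
    set F : Set X := C ∩ {z | g z = g p} with hF
    have hpF : p ∈ F := ⟨hp, rfl⟩
    have hFcl : IsClosed F := hCcl.inter (isClosed_eq g.continuous continuous_const)
    have hFcv : Convex ℝ F := by
      intro z₁ h₁ z₂ h₂ a b ha hb hab
      refine ⟨hCcv h₁.1 h₂.1 ha hb hab, ?_⟩
      show g (a • z₁ + b • z₂) = g p
      rw [map_add, map_smul, map_smul, h₁.2, h₂.2, smul_eq_mul, smul_eq_mul,
        ← add_mul, hab, one_mul]
    have hWlt : Module.finrank ℝ (vectorSpan ℝ F) < d := by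
      have hle : vectorSpan ℝ F ≤ V ⊓ LinearMap.ker (g : X →ₗ[ℝ] ℝ) := by
        rw [vectorSpan_def]
        refine Submodule.span_le.2 ?_
        rintro x ⟨a, ha, b, hb, rfl⟩
        show (a - b : X) ∈ _
        rw [SetLike.mem_coe]
        refine Submodule.mem_inf.2 ⟨hmemV a ha.1 b hb.1, ?_⟩
        rw [LinearMap.mem_ker]
        show g (a - b) = 0
        rw [map_sub, ha.2, hb.2, sub_self]
      have hlt : V ⊓ LinearMap.ker (g : X →ₗ[ℝ] ℝ) < V := by
        refine lt_of_le_of_ne inf_le_left (fun heq => ?_)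
        have hmem : (v₀ : X) ∈ V ⊓ LinearMap.ker (g : X →ₗ[ℝ] ℝ) := by
          rw [heq]; exact v₀.2
        have : g (v₀ : X) = 0 := (Submodule.mem_inf.1 hmem).2
        rw [hg v₀] at this
        linarith
      calc Module.finrank ℝ (vectorSpan ℝ F)
          ≤ Module.finrank ℝ (V ⊓ LinearMap.ker (g : X →ₗ[ℝ] ℝ) : Submodule ℝ X) :=
            Submodule.finrank_mono hle
        _ < Module.finrank ℝ V := Submodule.finrank_lt_finrank_of_lt hlt
        _ = d := hdim
    obtain ⟨s, hs, hqs⟩ := ih _ hWlt F x₀ N hFcl hFcv (fun z hz => hCbd z hz.1) rfl p hpF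
    refine ⟨s, convexHull_mono ?_ hs, hqs⟩
    rintro e ⟨⟨heC, hegp⟩, hext⟩
    refine ⟨heC, fun y' hy' z hz l hl0 hl1 heq => ?_⟩
    have h1 : g y' ≤ g p := hgle y' hy'
    have h2 : g z ≤ g p := hgle z hz
    have h3 : l * g y' + (1 - l) * g z = g p := by
      rw [← hegp, heq]; rw [map_add, map_smul, map_smul, smul_eq_mul, smul_eq_mul]
    have e1 : l * g y' ≤ l * g p := mul_le_mul_of_nonneg_left h1 hl0.le
    have e2 : (1 - l) * g z ≤ (1 - l) * g p :=
      mul_le_mul_of_nonneg_left h2 (by linarith)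
    have hy'F : y' ∈ F := ⟨hy', mul_left_cancel₀ (ne_of_gt hl0) (by linarith : l * g y' = l * g p)⟩
    have hzF : z ∈ F := ⟨hz, mul_left_cancel₀ (by linarith : (1 - l) ≠ 0)
      (by linarith : (1 - l) * g z = (1 - l) * g p)⟩
    exact hext y' hy'F z hzF l hl0 hl1 heq
  -- main case analysis
  by_cases h0 : (0 : V) ∈ interior (D y)
  · by_cases hVbot : V = ⊥
    · -- C = {y}
      have hCy : ∀ z ∈ C, z = y := by
        intro z hz
        have := hmemV z hz y hy
        rw [hVbot, Submodule.mem_bot, sub_eq_zero] at this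
        exact this
      have hyq : q (0 : X) = 0 := by simpa using hqh 0 0 le_rfl
      refine ⟨y, subset_convexHull ℝ _ ?_, by simpa using hyq⟩
      exact ⟨hy, fun y' hy' z hz l _ _ heq => by
        rw [hCy y' hy', hCy z hz]; exact ⟨rfl, rfl⟩⟩
    · obtain ⟨w, hwV, hw0⟩ := (Submodule.ne_bot_iff V).1 hVbot
      have hwn : 0 < ‖w‖ := norm_pos_iff.2 hw0
      set T : Set ℝ := {t : ℝ | y + t • w ∈ C} with hT
      have hT0 : (0:ℝ) ∈ T := by show y + (0:ℝ) • w ∈ C; simpa using hy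
      have hTcv : Convex ℝ T := by
        intro t₁ h₁ t₂ h₂ a b ha hb hab
        show y + (a • t₁ + b • t₂) • w ∈ C
        have heq : y + (a • t₁ + b • t₂) • w
            = a • (y + t₁ • w) + b • (y + t₂ • w) := by
          simp only [smul_eq_mul]
          rw [show a • (y + t₁ • w) + b • (y + t₂ • w)
              = (a + b) • y + (a * t₁ + b * t₂) • w by module, hab, one_smul]
        rw [heq]
        exact hCcv h₁ h₂ ha hb hab
      have hTcl : IsClosed T :=
        hCcl.preimage (continuous_const.add (continuous_id.smul continuous_const))
      have hTne : T.Nonempty := ⟨0, hT0⟩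
      have hTicc : ∀ u ∈ T, ∀ v ∈ T, ∀ x : ℝ, u ≤ x → x ≤ v → x ∈ T :=
        fun u hu v hv x h1 h2 => hTcv.ordConnected.out hu hv ⟨h1, h2⟩
      have hray : ∀ v : X, (∀ t : ℝ, 0 ≤ t → y + t • v ∈ C) → q v = 0 := by
        intro v hv
        by_contra hne
        have hqv : 0 < q v := lt_of_le_of_ne (hq0 v) (Ne.symm hne)
        have hN' : 0 ≤ N + q (x₀ - y) := by
          have := hCbd y hy; have := hq0 (y - x₀); have := hq0 (x₀ - y); linarith
        set t : ℝ := (N + q (x₀ - y) + 1) / q v with ht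
        have htpos : 0 ≤ t := by positivity
        have h2 := hCbd _ (hv t htpos)
        have h3 := hqtri (y + t • v - x₀) (x₀ - y)
        rw [show y + t • v - x₀ + (x₀ - y) = t • v by abel] at h3
        rw [hqh t v htpos] at h3
        have h4 : t * q v = N + q (x₀ - y) + 1 := div_mul_cancel₀ _ (ne_of_gt hqv)
        linarith
      -- helper: interior of D at y + c • w implies nearby c ± δ ∈ T
      have hmove : ∀ c : ℝ, (0 : V) ∈ interior (D (y + c • w)) →
          ∃ δ : ℝ, 0 < δ ∧ c + δ ∈ T ∧ c - δ ∈ T := by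
        intro c hin
        obtain ⟨ε, hε, hball⟩ := Metric.mem_nhds_iff.1 (mem_interior_iff_mem_nhds.1 hin)
        set δ : ℝ := ε / (2 * ‖w‖) with hδ
        have hδ0 : 0 < δ := by positivity
        have hmem : ∀ c' : ℝ, |c'| * ‖w‖ < ε → c + c' ∈ T := by
          intro c' hc'
          have hv : (⟨c' • w, Submodule.smul_mem V c' hwV⟩ : V) ∈ Metric.ball (0:V) ε := by
            rw [Metric.mem_ball, dist_zero_right]
            show ‖c' • w‖ < ε
            rw [norm_smul, Real.norm_eq_abs]
            exact hc'
          have := hball hv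
          show y + (c + c') • w ∈ C
          rw [show y + (c + c') • w = (y + c • w) + c' • w by module]
          exact this
        have habs : |δ| * ‖w‖ < ε := by
          rw [abs_of_pos hδ0, hδ]
          rw [div_mul_eq_mul_div, div_lt_iff₀ (by positivity)]
          nlinarith
        have h1 : c + δ ∈ T := hmem δ habs
        have h2 : c - δ ∈ T := by
          have := hmem (-δ) (by rwa [abs_neg])
          rwa [show c + -δ = c - δ by ring] at this
        exact ⟨δ, hδ0, h1, h2⟩
      by_cases hba : BddAbove T
      · have htp : sSup T ∈ T := hTcl.csSup_mem hTne hba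
        have hpC : y + sSup T • w ∈ C := htp
        have hnotp : (0 : V) ∉ interior (D (y + sSup T • w)) := by
          intro hin
          obtain ⟨δ, hδ0, h1, -⟩ := hmove _ hin
          have := le_csSup hba h1
          linarith
        obtain ⟨sP, hsP, hqP⟩ := face _ hpC hnotp
        by_cases hbb : BddBelow T
        · have htm : sInf T ∈ T := hTcl.csInf_mem hTne hbb
          have hmC : y + sInf T • w ∈ C := htm
          have hnotm : (0 : V) ∉ interior (D (y + sInf T • w)) := by
            intro hin
            obtain ⟨δ, hδ0, -, h2⟩ := hmove _ hin
            have := csInf_le hbb h2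
            linarith
          obtain ⟨sM, hsM, hqM⟩ := face _ hmC hnotm
          obtain ⟨δ, hδ0, hpδ, hmδ⟩ := hmove 0 (by simpa using h0)
          rw [zero_add] at hpδ
          rw [zero_sub] at hmδ
          have htp0 : 0 < sSup T := lt_of_lt_of_le hδ0 (le_csSup hba hpδ)
          have htm0 : sInf T < 0 := lt_of_le_of_lt (csInf_le hbb hmδ) (by linarith)
          obtain ⟨tp, htpv⟩ : ∃ tp : ℝ, tp = sSup T := ⟨_, rfl⟩
          obtain ⟨tm, htmv⟩ : ∃ tm : ℝ, tm = sInf T := ⟨_, rfl⟩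
          rw [← htpv] at htp0 htp hqP
          rw [← htmv] at htm0 htm hqM
          have hden : 0 < tp - tm := by linarith
          obtain ⟨l, hlv⟩ : ∃ l : ℝ, l = tp / (tp - tm) := ⟨_, rfl⟩
          have hl0 : 0 < l := hlv ▸ div_pos htp0 hden
          have hl1 : l < 1 := by rw [hlv, div_lt_one hden]; linarith
          have hlmul : l * (tp - tm) = tp := by
            rw [hlv]; exact div_mul_cancel₀ _ (ne_of_gt hden)
          have hcomb : l * tm + (1 - l) * tp = 0 := by linear_combination -hlmul
          have hyeq : y = l • (y + tm • w) + (1 - l) • (y + tp • w) := by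
            rw [show l • (y + tm • w) + (1 - l) • (y + tp • w)
                = y + (l * tm + (1 - l) * tp) • w by module]
            rw [hcomb]
            simp
          refine ⟨l • sM + (1 - l) • sP, ?_, ?_⟩
          · exact (convex_convexHull ℝ _) hsM hsP (le_of_lt hl0) (by linarith) (by ring)
          · have hsplit : y - (l • sM + (1 - l) • sP)
                = l • ((y + tm • w) - sM) + (1 - l) • ((y + tp • w) - sP) := by
              nth_rewrite 1 [hyeq]; module
            rw [hsplit]
            refine le_antisymm ?_ (hq0 _)
            calc q (l • ((y + tm • w) - sM) + (1 - l) • ((y + tp • w) - sP))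
                ≤ q (l • ((y + tm • w) - sM)) + q ((1 - l) • ((y + tp • w) - sP)) :=
                  hqtri _ _
              _ = l * q ((y + tm • w) - sM) + (1 - l) * q ((y + tp • w) - sP) := by
                  rw [hqh _ _ (le_of_lt hl0), hqh _ _ (by linarith)]
              _ = 0 := by rw [hqM, hqP]; ring
        · -- not bounded below : q (-w) = 0
          have hqmw : q (-w) = 0 := by
            refine hray (-w) fun t ht => ?_
            have : -t ∈ T := by
              obtain ⟨u, hu, hut⟩ := not_bddBelow_iff.1 hbb (-t)
              exact hTicc u hu 0 hT0 (-t) (le_of_lt hut) (by linarith)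
            show y + t • (-w) ∈ C
            rw [show y + t • (-w) = y + (-t) • w by module]
            exact this
          have htp0 : 0 ≤ sSup T := le_csSup hba hT0
          refine ⟨sP, hsP, ?_⟩
          have hsplit : y - sP = ((y + sSup T • w) - sP) + sSup T • (-w) := by module
          rw [hsplit]
          refine le_antisymm ?_ (hq0 _)
          calc q (((y + sSup T • w) - sP) + sSup T • (-w))
              ≤ q ((y + sSup T • w) - sP) + q (sSup T • (-w)) := hqtri _ _
            _ = 0 := by rw [hqP, hqh _ _ htp0, hqmw]; ring
      · -- not bounded above : q w = 0
        have hqw : q w = 0 := by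
          refine hray w fun t ht => ?_
          have : t ∈ T := by
            obtain ⟨u, hu, hut⟩ := not_bddAbove_iff.1 hba t
            exact hTicc 0 hT0 u hu t ht (le_of_lt hut)
          exact this
        by_cases hbb : BddBelow T
        · have htm : sInf T ∈ T := hTcl.csInf_mem hTne hbb
          have hmC : y + sInf T • w ∈ C := htm
          have hnotm : (0 : V) ∉ interior (D (y + sInf T • w)) := by
            intro hin
            obtain ⟨δ, hδ0, -, h2⟩ := hmove _ hin
            have := csInf_le hbb h2
            linarith
          obtain ⟨sM, hsM, hqM⟩ := face _ hmC hnotm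
          have htm0 : sInf T ≤ 0 := csInf_le hbb hT0
          refine ⟨sM, hsM, ?_⟩
          have hsplit : y - sM = ((y + sInf T • w) - sM) + (-(sInf T)) • w := by module
          rw [hsplit]
          refine le_antisymm ?_ (hq0 _)
          calc q (((y + sInf T • w) - sM) + (-(sInf T)) • w)
              ≤ q ((y + sInf T • w) - sM) + q ((-(sInf T)) • w) := hqtri _ _
            _ = 0 := by rw [hqM, hqh _ _ (by linarith), hqw]; ring
        · -- both unbounded: contradiction
          exfalso
          have hqmw : q (-w) = 0 := by
            refine hray (-w) fun t ht => ?_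
            have : -t ∈ T := by
              obtain ⟨u, hu, hut⟩ := not_bddBelow_iff.1 hbb (-t)
              exact hTicc u hu 0 hT0 (-t) (le_of_lt hut) (by linarith)
            show y + t • (-w) ∈ C
            rw [show y + t • (-w) = y + (-t) • w by module]
            exact this
          exact hw0 ((hqsep w).1 ⟨hqw, hqmw⟩)
  · exact face y hy h0

theorem stmt18 {X : Type*} [AddCommGroup X] [Module ℝ X] [FiniteDimensional ℝ X] (q : X → ℝ)
    (hq0 : ∀ x, 0 ≤ q x)
    (hqh : ∀ (t : ℝ) (x : X), 0 ≤ t → q (t • x) = t * q x)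
    (hqtri : ∀ x y, q (x + y) ≤ q x + q y)
    (hqsep : ∀ x, (q x = 0 ∧ q (-x) = 0) ↔ x = 0)
    (K : Set X) (hne : K.Nonempty) (hK : @IsCompact X (tauQ q) K) (hconv : Convex ℝ K)
    (K' : Set X)
    (h1 : convexHull ℝ {x | IsExtremePt (K + theta0 q) x} ⊆ K')
    (h2 : K' ⊆ convexHull ℝ {x | IsExtremePt (K + theta0 q) x} + theta0 q) :
    @IsCompact X (tauQ q) K' := by
  classical
  letI : NormedAddCommGroup X := stmt18_norm q hq0 hqh hqtri hqsep
  letI : NormedSpace ℝ X := stmt18_normedSpace q hq0 hqh hqtri hqsep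
  have hq00 : q 0 = 0 := stmt18_q_zero q hqh
  have hqle : ∀ x, q x ≤ ‖x‖ := fun x => le_max_left _ _
  -- extreme points of K + θ(0) lie in K
  have hEK : {x | IsExtremePt (K + theta0 q) x} ⊆ K := by
    rintro e ⟨heC, hext⟩
    obtain ⟨k, hk, t, ht, hkt⟩ := heC
    have ht' : q t = 0 := ht
    have hkC : k ∈ K + theta0 q := Set.mem_add.2 ⟨k, hk, 0, hq00, add_zero k⟩
    have hk2tC : k + (2 : ℝ) • t ∈ K + theta0 q := by
      refine Set.mem_add.2 ⟨k, hk, (2 : ℝ) • t, ?_, rfl⟩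
      show q ((2 : ℝ) • t) = 0
      rw [hqh 2 t (by norm_num), ht', mul_zero]
    have heq : e = (1/2 : ℝ) • k + (1 - 1/2 : ℝ) • (k + (2 : ℝ) • t) := by
      rw [← hkt]; norm_num; module
    obtain ⟨hek, -⟩ := hext k hkC (k + (2 : ℝ) • t) hk2tC (1/2) (by norm_num)
      (by norm_num) heq
    rw [hek]; exact hk
  have hSK : convexHull ℝ {x | IsExtremePt (K + theta0 q) x} ⊆ K := convexHull_min hEK hconv
  obtain ⟨x₀, hx₀⟩ := hne
  obtain ⟨N, hN⟩ := stmt18_bounded q hK x₀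
  have hCbd : ∀ z ∈ K + theta0 q, q (z - x₀) ≤ N := by
    rintro z ⟨k, hk, t, ht, rfl⟩
    have ht' : q t = 0 := ht
    have := hqtri (k - x₀) t
    rw [show k - x₀ + t = k + t - x₀ by abel] at this
    have := hN k hk
    linarith
  have hCcl : IsClosed (K + theta0 q) :=
    stmt18_closed q hq0 hq00 hqtri hqle ⟨x₀, hx₀⟩ hK
  have hθcv : Convex ℝ (theta0 q) := by
    intro t₁ h₁ t₂ h₂ a b ha hb hab
    have h₁' : q t₁ = 0 := h₁
    have h₂' : q t₂ = 0 := h₂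
    show q (a • t₁ + b • t₂) = 0
    refine le_antisymm ?_ (hq0 _)
    have := hqtri (a • t₁) (b • t₂)
    rw [hqh a t₁ ha, hqh b t₂ hb, h₁', h₂'] at this
    linarith
  have hCcv : Convex ℝ (K + theta0 q) := hconv.add hθcv
  have hmain : ∀ y ∈ K + theta0 q,
      ∃ s ∈ convexHull ℝ {x | IsExtremePt (K + theta0 q) x}, q (y - s) = 0 :=
    @stmt18_klee X _ _ (by assumption) q hq0 hqh hqtri hqsep _ (K + theta0 q) x₀ N hCcl hCcv hCbd rfl
  -- final covering argument
  refine @isCompact_of_finite_subcover X (tauQ q) K' ?_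
  intro ι U hUo hcov
  have habs : ∀ i, ∀ x ∈ U i, ∀ t, q t = 0 → x + t ∈ U i :=
    fun i => stmt18_absorb q hqtri (hUo i)
  have hKcov : K ⊆ ⋃ i, U i := by
    intro y hy
    have hyC : y ∈ K + theta0 q := Set.mem_add.2 ⟨y, hy, 0, hq00, add_zero y⟩
    obtain ⟨s, hsS, hqys⟩ := hmain y hyC
    obtain ⟨i, hi⟩ := Set.mem_iUnion.1 (hcov (h1 hsS))
    have := habs i s hi (y - s) hqys
    rw [show s + (y - s) = y by abel] at this
    exact Set.mem_iUnion.2 ⟨i, this⟩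
  obtain ⟨F, hF⟩ := @IsCompact.elim_finite_subcover X (tauQ q) _ _ hK U hUo hKcov
  refine ⟨F, fun x hx => ?_⟩
  obtain ⟨s, hsS, t, ht, rfl⟩ := h2 hx
  have ht' : q t = 0 := ht
  have hsK : s ∈ K := hSK hsS
  obtain ⟨i, hiF, hsi⟩ := Set.mem_iUnion₂.1 (hF hsK)
  exact Set.mem_iUnion₂.2 ⟨i, hiF, habs i s hsi t ht'⟩
end

section
/- For every x ∈ X, the set θ(x) = x + θ(0) = {x + w : w ∈ X, q(w) = 0} is a convex, q-compact set whose set of extreme points is exactly {x}. -/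
open Set Pointwise

theorem stmt19 {X : Type*} [AddCommGroup X] [Module ℝ X] (q : X → ℝ)
    (hq0 : ∀ x, 0 ≤ q x)
    (hqh : ∀ (t : ℝ) (x : X), 0 ≤ t → q (t • x) = t * q x)
    (hqtri : ∀ x y, q (x + y) ≤ q x + q y)
    (hqsep : ∀ x, (q x = 0 ∧ q (-x) = 0) ↔ x = 0)
    (x : X) :
    Convex ℝ ({x} + theta0 q) ∧ @IsCompact X (tauQ q) ({x} + theta0 q) ∧
    {p | IsExtremePt ({x} + theta0 q) p} = {x} := by
  have hq00 : q 0 = 0 := by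
    have := hqh 0 (0 : X) le_rfl; simpa using this
  have hmem : ∀ p, p ∈ ({x} + theta0 q) ↔ ∃ w, q w = 0 ∧ p = x + w := by
    intro p
    simp only [Set.mem_add, Set.mem_singleton_iff, theta0, Set.mem_setOf_eq]
    constructor
    · rintro ⟨a, rfl, b, hb, rfl⟩
      exact ⟨b, hb, rfl⟩
    · rintro ⟨w, hw, rfl⟩
      exact ⟨x, rfl, w, hw, rfl⟩
  have hconv : Convex ℝ ({x} + theta0 q) := by
    apply Convex.add (convex_singleton x)
    intro u hu v hv a b ha hb hab
    simp only [theta0, Set.mem_setOf_eq] at hu hv ⊢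
    have h1 : q (a • u + b • v) ≤ a * q u + b * q v := by
      calc q (a • u + b • v) ≤ q (a • u) + q (b • v) := hqtri _ _
        _ = a * q u + b * q v := by rw [hqh a u ha, hqh b v hb]
    have h2 : a * q u + b * q v = 0 := by rw [hu, hv]; ring
    have := hq0 (a • u + b • v)
    linarith
  have hcover : ∀ U : Set X,
      TopologicalSpace.GenerateOpen {S | ∃ z ε, 0 < ε ∧ S = asymBall q z ε} U →
      x ∈ U → ({x} + theta0 q) ⊆ U := by
    intro U hU
    induction hU with
    | basic S hS =>
        intro hx p hp
        obtain ⟨z, ε, hε, rfl⟩ := hS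
        obtain ⟨w, hw, rfl⟩ := (hmem p).1 hp
        simp only [asymBall, Set.mem_setOf_eq] at hx ⊢
        have h : x + w - z = w + (x - z) := by abel
        rw [h]
        calc q (w + (x - z)) ≤ q w + q (x - z) := hqtri _ _
          _ = q (x - z) := by rw [hw]; ring
          _ < ε := hx
    | univ => intro _; exact Set.subset_univ _
    | inter S T _ _ ihS ihT => intro hx; exact Set.subset_inter (ihS hx.1) (ihT hx.2)
    | sUnion 𝒮 _ ih =>
        intro hx
        obtain ⟨S, hS, hxS⟩ := hx
        exact (ih S hS hxS).trans (Set.subset_sUnion_of_mem hS)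
  have hcomp : @IsCompact X (tauQ q) ({x} + theta0 q) := by
    letI := tauQ q
    apply isCompact_of_finite_subcover
    intro ι U hUopen hsub
    have hx : x ∈ ({x} + theta0 q) := (hmem x).2 ⟨0, hq00, by simp⟩
    obtain ⟨i, hi⟩ := Set.mem_iUnion.1 (hsub hx)
    refine ⟨{i}, ?_⟩
    have h := hcover (U i) (hUopen i) hi
    simpa using h
  refine ⟨hconv, hcomp, ?_⟩
  ext p
  simp only [Set.mem_setOf_eq, Set.mem_singleton_iff]
  constructor
  · rintro ⟨hp, hpe⟩
    obtain ⟨w, hw, rfl⟩ := (hmem _).1 hp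
    have h2w : q ((2 : ℝ) • w) = 0 := by rw [hqh 2 w (by norm_num), hw]; ring
    have hy : x + (2 : ℝ) • w ∈ ({x} + theta0 q) := (hmem _).2 ⟨_, h2w, rfl⟩
    have hz : x ∈ ({x} + theta0 q) := (hmem _).2 ⟨0, hq00, by simp⟩
    have heq : x + w = (1/2 : ℝ) • (x + (2 : ℝ) • w) + (1 - 1/2 : ℝ) • x := by
      module
    exact (hpe _ hy _ hz (1/2) (by norm_num) (by norm_num) heq).2
  · intro hpx
    rw [hpx]
    refine ⟨(hmem _).2 ⟨0, hq00, by simp⟩, ?_⟩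
    intro y hy z hz l hl0 hl1 heq
    obtain ⟨w1, hw1, rfl⟩ := (hmem _).1 hy
    obtain ⟨w2, hw2, rfl⟩ := (hmem _).1 hz
    have h1l : (0 : ℝ) < 1 - l := by linarith
    have hkey : l • w1 + (1 - l) • w2 = 0 := by
      have h : l • (x + w1) + (1 - l) • (x + w2) = x + (l • w1 + (1 - l) • w2) := by
        module
      rw [h] at heq
      exact (left_eq_add.mp heq)
    have e1 : (1 - l) • (-w2) = l • w1 := by
      rw [smul_neg, neg_eq_iff_add_eq_zero, add_comm]
      exact hkey
    have e2 : l • (-w1) = (1 - l) • w2 := by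
      rw [smul_neg, neg_eq_iff_add_eq_zero]
      exact hkey
    have hq1 : q (-w2) = 0 := by
      have h : (1 - l) * q (-w2) = l * q w1 := by
        rw [← hqh _ _ h1l.le, ← hqh _ _ hl0.le, e1]
      rw [hw1, mul_zero] at h
      have := mul_eq_zero.mp h
      rcases this with h' | h'
      · linarith
      · exact h'
    have hq2 : q (-w1) = 0 := by
      have h : l * q (-w1) = (1 - l) * q w2 := by
        rw [← hqh _ _ hl0.le, ← hqh _ _ h1l.le, e2]
      rw [hw2, mul_zero] at h
      have := mul_eq_zero.mp h
      rcases this with h' | h'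
      · linarith
      · exact h'
    have hw10 : w1 = 0 := (hqsep w1).mp ⟨hw1, hq2⟩
    have hw20 : w2 = 0 := (hqsep w2).mp ⟨hw2, hq1⟩
    subst hw10; subst hw20
    simp
end
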